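/- arXiv:2010.04433 — 6 statements merged into one kernel-verified Lean document; each statement's English description precedes it below -/
import Mathlib

section
/- Let R be a commutative ring, q ∈ R, and let A be a commutative R-algebra equipped with an R-algebra homomorphism R[X] → A which is formally étale; let x ∈ A be the image of X. Assume that A is complete and separated for the (q−1)A-adic topology (i.e., A is (q−1)-adically complete). Then there exists a unique R-algebra endomorphism σ of A such that σ(x) = q·x and σ(a) ≡ a (mod (q−1)A) for all a ∈ A. -/
open Polynomial

universe u

/-- If `x` is a topologically étale coordinate on the `(q-1)`-adically complete
`R`-algebra `A`, then there is a unique continuous (i.e. congruent to the identity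
modulo `q-1`) `R`-algebra endomorphism `σ` of `A` with `σ(x) = q·x`. -/
theorem exists_unique_sigma
    (R A : Type u) [CommRing R] (q : R)
    [CommRing A] [Algebra R A]
    [Algebra (Polynomial R) A] [IsScalarTower R (Polynomial R) A]
    [Algebra.FormallyEtale (Polynomial R) A]
    (x : A) (hx : x = algebraMap (Polynomial R) A X)
    [IsAdicComplete (Ideal.span {algebraMap R A q - 1}) A] :
    ∃! σ : A →ₐ[R] A,
      σ x = algebraMap R A q * x ∧
      ∀ a : A, σ a - a ∈ Ideal.span {algebraMap R A q - 1} := by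
  classical
  haveI hsm : Algebra.FormallySmooth (Polynomial R) A :=
    (Algebra.FormallyEtale.iff_formallyUnramified_and_formallySmooth.mp ‹_›).2
  haveI hun : Algebra.FormallyUnramified (Polynomial R) A :=
    (Algebra.FormallyEtale.iff_formallyUnramified_and_formallySmooth.mp ‹_›).1
  set I : Ideal A := Ideal.span {algebraMap R A q - 1} with hIdef
  set fP : Polynomial R →ₐ[R] A := IsScalarTower.toAlgHom R (Polynomial R) A with hfP
  set g : Polynomial R →ₐ[R] A := aeval (algebraMap R A q * x) with hgdef
  have hfPX : fP X = x := hx.symm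
  have hgX : g X = algebraMap R A q * x := by simp [hgdef]
  have hfg : ∀ p : Polynomial R, fP p - g p ∈ I := by
    have h1 : (Ideal.Quotient.mkₐ R I).comp fP = (Ideal.Quotient.mkₐ R I).comp g := by
      apply Polynomial.algHom_ext
      simp only [AlgHom.comp_apply, hfPX, hgX, Ideal.Quotient.mkₐ_eq_mk]
      rw [Ideal.Quotient.eq]
      have h2 : x - algebraMap R A q * x = -((algebraMap R A q - 1) * x) := by ring
      rw [h2]
      exact neg_mem (Ideal.mul_mem_right _ _ (Ideal.subset_span rfl))
    intro p
    rw [← Ideal.Quotient.eq]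
    simpa using AlgHom.congr_fun h1 p
  have hle1 : ∀ n : ℕ, I ^ (n + 1) ≤ I := fun n => Ideal.pow_le_self (Nat.succ_ne_zero n)
  -- kernel of the factor map is the image of `I`
  have hker : ∀ n : ℕ, RingHom.ker (Ideal.Quotient.factor (S := (I ^ (n + 1))) (T := I) (hle1 n))
      = I.map (Ideal.Quotient.mk (I ^ (n + 1))) := by
    intro n
    ext y
    obtain ⟨c, rfl⟩ := Ideal.Quotient.mk_surjective y
    simp only [RingHom.mem_ker, Ideal.Quotient.factor_mk]
    constructor
    · intro h
      exact Ideal.mem_map_of_mem _ (Ideal.Quotient.eq_zero_iff_mem.mp h)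
    · intro h
      rw [Ideal.mem_map_iff_of_surjective _ Ideal.Quotient.mk_surjective] at h
      obtain ⟨c', hc', hcc⟩ := h
      have h3 : c' - c ∈ I ^ (n + 1) := Ideal.Quotient.eq.mp hcc
      have h4 : c ∈ I := by
        have : c = c' - (c' - c) := by ring
        rw [this]
        exact Ideal.sub_mem _ hc' (hle1 n h3)
      exact Ideal.Quotient.eq_zero_iff_mem.mpr h4
  have hnil : ∀ n : ℕ, IsNilpotent
      (RingHom.ker (Ideal.Quotient.factor (S := (I ^ (n + 1))) (T := I) (hle1 n))) := by
    intro n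
    rw [hker n]
    exact ⟨n + 1, by rw [← Ideal.map_pow, Ideal.map_quotient_self, Ideal.zero_eq_bot]⟩
  -- existence of the compatible system of lifts
  have main : ∀ n : ℕ, ∃ τ : A →+* A ⧸ I ^ (n + 1),
      (∀ p : Polynomial R, τ (fP p) = Ideal.Quotient.mk _ (g p)) ∧
      (∀ a : A, Ideal.Quotient.factor (S := (I ^ (n + 1))) (T := I) (hle1 n) (τ a)
        = Ideal.Quotient.mk I a) := by
    intro n
    letI : Algebra (Polynomial R) (A ⧸ I ^ (n + 1)) :=
      ((Ideal.Quotient.mk (I ^ (n + 1))).comp g.toRingHom).toAlgebra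
    set K : Ideal (A ⧸ I ^ (n + 1)) := I.map (Ideal.Quotient.mk (I ^ (n + 1))) with hK
    have hKnil : IsNilpotent K :=
      ⟨n + 1, by rw [hK, ← Ideal.map_pow, Ideal.map_quotient_self, Ideal.zero_eq_bot]⟩
    have hbcomm : ∀ p : Polynomial R,
        (Ideal.Quotient.mk K).comp (Ideal.Quotient.mk (I ^ (n + 1)))
          (algebraMap (Polynomial R) A p)
          = algebraMap (Polynomial R) ((A ⧸ I ^ (n + 1)) ⧸ K) p := by
      intro p
      have h1 : algebraMap (Polynomial R) ((A ⧸ I ^ (n + 1)) ⧸ K) p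
          = Ideal.Quotient.mk K (Ideal.Quotient.mk (I ^ (n + 1)) (g p)) :=
        (Ideal.Quotient.mk_algebraMap (R₁ := Polynomial R) K p).symm
      rw [h1]
      simp only [RingHom.comp_apply]
      rw [Ideal.Quotient.eq, ← map_sub]
      exact Ideal.mem_map_of_mem _ (hfg p)
    let base : A →ₐ[Polynomial R] (A ⧸ I ^ (n + 1)) ⧸ K :=
      { toRingHom := (Ideal.Quotient.mk K).comp (Ideal.Quotient.mk (I ^ (n + 1))),
        commutes' := hbcomm }
    obtain ⟨τa, hτa⟩ := Algebra.FormallySmooth.exists_lift K hKnil base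
    refine ⟨τa.toRingHom, ?_, ?_⟩
    · intro p
      have h1 : fP p = algebraMap (Polynomial R) A p := rfl
      show τa (fP p) = _
      rw [h1, τa.commutes p]
      rfl
    · intro a
      have h2 := AlgHom.congr_fun hτa a
      simp only [AlgHom.comp_apply, Ideal.Quotient.mkₐ_eq_mk] at h2
      have h2' : Ideal.Quotient.mk K (τa a)
          = Ideal.Quotient.mk K (Ideal.Quotient.mk (I ^ (n + 1)) a) := h2
      have h3 := Ideal.Quotient.eq.mp h2'
      have h4 : τa a - Ideal.Quotient.mk (I ^ (n + 1)) a
          ∈ RingHom.ker (Ideal.Quotient.factor (S := (I ^ (n + 1))) (T := I) (hle1 n)) := by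
        rw [hker n]; exact h3
      rw [RingHom.mem_ker, map_sub, sub_eq_zero] at h4
      show Ideal.Quotient.factor (S := (I ^ (n + 1))) (T := I) (hle1 n) (τa a) = _
      rw [h4, Ideal.Quotient.factor_mk]
  -- uniqueness of lifts at each level
  have uniq : ∀ n : ℕ, ∀ τ₁ τ₂ : A →+* A ⧸ I ^ (n + 1),
      (∀ p : Polynomial R, τ₁ (fP p) = Ideal.Quotient.mk _ (g p)) →
      (∀ p : Polynomial R, τ₂ (fP p) = Ideal.Quotient.mk _ (g p)) →
      (∀ a : A, Ideal.Quotient.factor (S := (I ^ (n + 1))) (T := I) (hle1 n) (τ₁ a)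
        = Ideal.Quotient.factor (S := (I ^ (n + 1))) (T := I) (hle1 n) (τ₂ a)) →
      τ₁ = τ₂ := by
    intro n τ₁ τ₂ h₁ h₂ h
    letI : Algebra (Polynomial R) (A ⧸ I ^ (n + 1)) :=
      ((Ideal.Quotient.mk (I ^ (n + 1))).comp g.toRingHom).toAlgebra
    let T₁ : A →ₐ[Polynomial R] A ⧸ I ^ (n + 1) :=
      { toRingHom := τ₁, commutes' := fun p => by simpa [hfP, RingHom.algebraMap_toAlgebra] using h₁ p }
    let T₂ : A →ₐ[Polynomial R] A ⧸ I ^ (n + 1) :=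
      { toRingHom := τ₂, commutes' := fun p => by simpa [hfP, RingHom.algebraMap_toAlgebra] using h₂ p }
    have := Algebra.FormallyUnramified.ext' (R := Polynomial R)
      (Ideal.Quotient.factor (S := (I ^ (n + 1))) (T := I) (hle1 n)) (hnil n) T₁ T₂ h
    exact congrArg AlgHom.toRingHom this
  choose τ hτ1 hτ2 using main
  have hfactor2 : ∀ (S T U : Ideal A) (h1 : S ≤ T) (h2 : T ≤ U) (y : A ⧸ S),
      Ideal.Quotient.factor (S := T) (T := U) h2 (Ideal.Quotient.factor (S := S) (T := T) h1 y)
        = Ideal.Quotient.factor (S := S) (T := U) (le_trans h1 h2) y := by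
    intro S T U h1 h2 y
    obtain ⟨c, rfl⟩ := Ideal.Quotient.mk_surjective y
    simp
  -- one-step compatibility
  have hstep : ∀ n : ℕ, ∀ a : A,
      Ideal.Quotient.factor (S := (I ^ (n + 2))) (T := (I ^ (n + 1)))
        (Ideal.pow_le_pow_right (by omega)) (τ (n + 1) a) = τ n a := by
    intro n
    have h := uniq n ((Ideal.Quotient.factor (S := (I ^ (n + 2))) (T := (I ^ (n + 1)))
        (Ideal.pow_le_pow_right (by omega))).comp (τ (n + 1))) (τ n)
      (fun p => by simp [RingHom.comp_apply, hτ1 (n + 1) p])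
      (hτ1 n)
      (fun a => by
        rw [RingHom.comp_apply, hfactor2, hτ2 n a]
        exact hτ2 (n + 1) a)
    exact fun a => RingHom.congr_fun h a
  -- general compatibility
  have hcompat : ∀ m n : ℕ, ∀ h : m ≤ n, ∀ a : A,
      Ideal.Quotient.factor (S := (I ^ (n + 1))) (T := (I ^ (m + 1)))
        (Ideal.pow_le_pow_right (by omega)) (τ n a) = τ m a := by
    intro m n h
    induction n, h using Nat.le_induction with
    | base =>
      intro a
      obtain ⟨c, hc⟩ := Ideal.Quotient.mk_surjective (τ m a)
      rw [← hc, Ideal.Quotient.factor_mk]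
    | succ n hmn ih =>
      intro a
      rw [← hfactor2 (I ^ (n + 2)) (I ^ (n + 1)) (I ^ (m + 1))
        (Ideal.pow_le_pow_right (by omega)) (Ideal.pow_le_pow_right (by omega)),
        hstep n a]
      exact ih a
  -- the limit map
  have hsmul : ∀ m : ℕ, (I ^ m • ⊤ : Submodule A A) = (I ^ m : Ideal A) := by
    intro m
    rw [Ideal.smul_eq_mul, Ideal.mul_top]
  have hlim : ∀ a : A, ∃ s : A, ∀ n : ℕ,
      Ideal.Quotient.mk (I ^ (n + 1)) s = τ n a := by
    intro a
    choose b hb using fun n => Ideal.Quotient.mk_surjective (I := I ^ (n + 1)) (τ n a)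
    have hc : ∀ {m n : ℕ}, m ≤ n →
        (fun k => b (k - 1)) m ≡ (fun k => b (k - 1)) n [SMOD (I ^ m • ⊤ : Submodule A A)] := by
      intro m n hmn
      rw [SModEq.sub_mem, hsmul]
      match m, hmn with
      | 0, _ => simp
      | (k + 1), hmn =>
        obtain ⟨l, rfl⟩ : ∃ l, n = l + 1 := ⟨n - 1, by omega⟩
        simp only [Nat.add_sub_cancel]
        have h1 : Ideal.Quotient.mk (I ^ (k + 1)) (b k) = τ k a := hb k
        have h2 : Ideal.Quotient.mk (I ^ (k + 1)) (b l) = τ k a := by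
          have h3 := hcompat k l (by omega) a
          rw [← h3, ← hb l, Ideal.Quotient.factor_mk]
        rw [← Ideal.Quotient.eq, h1, h2]
    obtain ⟨L, hL⟩ := IsPrecomplete.prec (IsAdicComplete.toIsPrecomplete (I := I) (M := A)) hc
    refine ⟨L, fun n => ?_⟩
    have h1 := hL (n + 1)
    rw [SModEq.sub_mem, hsmul] at h1
    have h2 : Ideal.Quotient.mk (I ^ (n + 1)) (b n) = Ideal.Quotient.mk (I ^ (n + 1)) L := by
      rw [Ideal.Quotient.eq]
      simpa using h1
    rw [← h2, hb n]
  have key : ∀ y z : A,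
      (∀ n : ℕ, Ideal.Quotient.mk (I ^ (n + 1)) y = Ideal.Quotient.mk (I ^ (n + 1)) z) →
      y = z := by
    intro y z h
    have h1 : y - z = 0 := by
      refine IsHausdorff.haus (IsAdicComplete.toIsHausdorff (I := I) (M := A)) (y - z) ?_
      intro n
      rw [SModEq.zero, hsmul]
      match n with
      | 0 => simp
      | (k + 1) =>
        rw [← Ideal.Quotient.eq_zero_iff_mem, map_sub, sub_eq_zero]
        exact h k
    exact sub_eq_zero.mp h1
  choose s hs using hlim
  have halgC : ∀ r : R, fP (C r) = algebraMap R A r := by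
    intro r
    rw [← Polynomial.algebraMap_eq]
    exact fP.commutes r
  have hgC : ∀ r : R, g (C r) = algebraMap R A r := by
    intro r
    rw [hgdef]
    exact aeval_C _ r
  -- `s` is multiplicative etc. since each `τ n` is
  have hτalg : ∀ n : ℕ, ∀ r : R,
      τ n (algebraMap R A r) = Ideal.Quotient.mk (I ^ (n + 1)) (algebraMap R A r) := by
    intro n r
    rw [← halgC r, hτ1 n (C r), hgC r, halgC r]
  let σ : A →ₐ[R] A :=
    { toFun := s
      map_one' := key _ _ (fun n => by rw [hs, map_one, map_one])
      map_mul' := fun a b => key _ _ (fun n => by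
        rw [hs, map_mul, map_mul (Ideal.Quotient.mk (I ^ (n + 1))), hs, hs])
      map_zero' := key _ _ (fun n => by rw [hs, map_zero, map_zero])
      map_add' := fun a b => key _ _ (fun n => by
        rw [hs, map_add, map_add (Ideal.Quotient.mk (I ^ (n + 1))), hs, hs])
      commutes' := fun r => key _ _ (fun n => by rw [hs, hτalg n r]) }
  have hσ : ∀ a : A, σ a = s a := fun a => rfl
  have hσx : σ x = algebraMap R A q * x := by
    apply key
    intro n
    rw [hσ, hs, ← hfPX, hτ1 n X, hgX, hfPX]
  have hσcong : ∀ a : A, σ a - a ∈ I := by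
    intro a
    rw [← Ideal.Quotient.eq]
    have h1 : Ideal.Quotient.factor (S := (I ^ (0 + 1))) (T := I) (hle1 0)
        (Ideal.Quotient.mk (I ^ (0 + 1)) (σ a)) = Ideal.Quotient.mk I (σ a) :=
      Ideal.Quotient.factor_mk _ _
    rw [← h1, hσ, hs, hτ2 0 a]
  refine ⟨σ, ⟨hσx, hσcong⟩, ?_⟩
  rintro σ' ⟨hσ'x, hσ'cong⟩
  have hfgσ' : ∀ p : Polynomial R, σ' (fP p) = g p := by
    have h1 : σ'.comp fP = g := by
      apply Polynomial.algHom_ext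
      rw [AlgHom.comp_apply, hfPX, hσ'x, hgX]
    exact fun p => AlgHom.congr_fun h1 p
  have hn : ∀ n : ℕ, (Ideal.Quotient.mk (I ^ (n + 1))).comp σ'.toRingHom = τ n := by
    intro n
    apply uniq n
    · intro p
      rw [RingHom.comp_apply]
      exact congrArg _ (hfgσ' p)
    · exact hτ1 n
    · intro a
      rw [RingHom.comp_apply, Ideal.Quotient.factor_mk, hτ2 n a, Ideal.Quotient.eq]
      exact hσ'cong a
  apply AlgHom.ext
  intro a
  apply key
  intro n
  rw [hσ, hs]
  exact RingHom.congr_fun (hn n) a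
end

section
/- Let R be a commutative ring, q ∈ R, and let A be a commutative R-algebra with a formally étale structure map R[X] → A; let x be the image of X. Assume q−1 is nilpotent in A, and let σ be an R-algebra endomorphism of A with σ(x) = q·x and σ(a) − a ∈ (q−1)A for all a ∈ A. Let I be the kernel of the multiplication map A ⊗_R A → A, extend σ to A ⊗_R A as σ ⊗ id, and for n ∈ ℕ set I^{(n+1)_σ} := I · J_1 · ⋯ · J_n, where J_i is the ideal of A ⊗_R A generated by the image of I under (σ ⊗ id)^i. Then for every n ∈ ℕ, the A-algebra homomorphism A[ξ] → (A ⊗_R A)/I^{(n+1)_σ} sending ξ to the class of 1⊗x − x⊗1 (where A acts on A ⊗_R A through a ↦ a⊗1) is surjective with kernel generated by ξ^{(n+1)_q} := ∏_{i=0}^{n}(ξ + (1−q^i)·x); that is, it induces an isomorphism of A-algebras A[ξ]/(∏_{i=0}^{n}(ξ + (1−q^i)x)) ≅ (A ⊗_R A)/I^{(n+1)_σ}. (This says that x is a q-coordinate on A.) -/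
set_option maxHeartbeats 1600000
set_option synthInstance.maxHeartbeats 400000

open Polynomial TensorProduct

universe u

lemma aux_span_nilpotent {T : Type*} [CommRing T] {z : T} (hz : IsNilpotent z) :
    IsNilpotent (Ideal.span {z}) := by
  obtain ⟨m, hm⟩ := hz
  exact ⟨m, by rw [Ideal.span_singleton_pow, hm]; simp⟩

lemma aux_absorb {T : Type*} [CommRing T] (J P N : Ideal T) :
    (J + N) * (P + N) ≤ J * P + N := by
  refine Ideal.mul_le.mpr fun r hr s hs => ?_
  obtain ⟨r1, hr1, r2, hr2, rfl⟩ := Submodule.mem_sup.mp hr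
  obtain ⟨s1, hs1, s2, hs2, rfl⟩ := Submodule.mem_sup.mp hs
  have : (r1 + r2) * (s1 + s2) = r1 * s1 + (r1 * s2 + r2 * (s1 + s2)) := by ring
  rw [this]
  refine add_mem (Submodule.mem_sup_left (Ideal.mul_mem_mul hr1 hs1))
    (Submodule.mem_sup_right (add_mem (Ideal.mul_mem_left _ _ hs2)
      (Ideal.mul_mem_right _ _ hr2)))

lemma aux_prod_mono {T : Type*} [CommRing T] (s : Finset ℕ) (J K : ℕ → Ideal T)
    (h : ∀ i ∈ s, J i ≤ K i) : ∏ i ∈ s, J i ≤ ∏ i ∈ s, K i := by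
  classical
  induction s using Finset.induction with
  | empty => simp
  | @insert a s ha ih =>
    rw [Finset.prod_insert ha, Finset.prod_insert ha]
    exact Ideal.mul_mono (h a (Finset.mem_insert_self a s))
      (ih fun i hi => h i (Finset.mem_insert_of_mem hi))

lemma aux_prod_le {T : Type*} [CommRing T] (s : Finset ℕ) (I : Ideal T) (J : ℕ → Ideal T)
    (N : Ideal T) (h : ∀ i ∈ s, I ≤ J i + N) : I ^ s.card ≤ (∏ i ∈ s, J i) + N := by
  classical
  induction s using Finset.induction with
  | empty => simp
  | @insert a s ha ih =>
    rw [Finset.card_insert_of_notMem ha, Finset.prod_insert ha, pow_succ']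
    refine le_trans (Ideal.mul_mono (h a (Finset.mem_insert_self a s))
      (ih fun i hi => h i (Finset.mem_insert_of_mem hi))) (aux_absorb _ _ _)

lemma aux_prod_sub_pow {A : Type*} [CommRing A] (c : A) (s : Finset ℕ) (e : ℕ → A)
    (h : ∀ i ∈ s, e i ∈ Ideal.span {c}) :
    (∏ i ∈ s, (Polynomial.X + Polynomial.C (e i))) - Polynomial.X ^ s.card
      ∈ Ideal.span {(Polynomial.C c : Polynomial A)} := by
  classical
  induction s using Finset.induction with
  | empty => simp
  | @insert a s ha ih =>
    rw [Finset.card_insert_of_notMem ha, Finset.prod_insert ha, pow_succ']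
    have h1 : (X + C (e a)) * ((∏ i ∈ s, (X + C (e i))) - X ^ s.card)
        ∈ Ideal.span {(C c : Polynomial A)} :=
      Ideal.mul_mem_left _ _ (ih fun i hi => h i (Finset.mem_insert_of_mem hi))
    have hea := h a (Finset.mem_insert_self a s)
    rw [Ideal.mem_span_singleton] at hea
    have h2 : (C (e a) : Polynomial A) * X ^ s.card ∈ Ideal.span {(C c : Polynomial A)} :=
      Ideal.mul_mem_right _ _ (Ideal.mem_span_singleton.mpr (map_dvd Polynomial.C hea))
    have : (X + C (e a)) * ∏ i ∈ s, (X + C (e i)) - X * X ^ s.card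
        = (X + C (e a)) * ((∏ i ∈ s, (X + C (e i))) - X ^ s.card) + C (e a) * X ^ s.card := by
      ring
    rw [this]
    exact add_mem h1 h2

/-- A topologically étale coordinate is a `q`-coordinate: the twisted principal parts of
order `n` of `A/R` are the free `A`-algebra `A[ξ]/(ξ^{(n+1)_q})` via `ξ ↦ 1⊗x - x⊗1`. -/
theorem topologically_etale_coordinate_is_q_coordinate
    (R A : Type u) [CommRing R] (q : R)
    [CommRing A] [Algebra R A]
    [Algebra (Polynomial R) A] [IsScalarTower R (Polynomial R) A]
    [Algebra.FormallyEtale (Polynomial R) A]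
    (x : A) (hx : x = algebraMap (Polynomial R) A Polynomial.X)
    (hq : IsNilpotent (algebraMap R A q - 1))
    (σ : A →ₐ[R] A) (hσx : σ x = algebraMap R A q * x)
    (hσ : ∀ a : A, σ a - a ∈ Ideal.span {algebraMap R A q - 1})
    (I : Ideal (A ⊗[R] A))
    (hI : I = RingHom.ker (Algebra.TensorProduct.lmul' R (S := A)).toRingHom)
    (τ : (A ⊗[R] A) →ₐ[R] (A ⊗[R] A))
    (hτ : τ = Algebra.TensorProduct.map σ (AlgHom.id R A))
    (n : ℕ) :
    Function.Surjective
      (Polynomial.aeval (R := A)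
        (Ideal.Quotient.mk (∏ i ∈ Finset.range (n + 1), Ideal.map (τ ^ i) I)
          ((1 : A) ⊗ₜ[R] x - x ⊗ₜ[R] (1 : A)))) ∧
    RingHom.ker
      (Polynomial.aeval (R := A)
        (Ideal.Quotient.mk (∏ i ∈ Finset.range (n + 1), Ideal.map (τ ^ i) I)
          ((1 : A) ⊗ₜ[R] x - x ⊗ₜ[R] (1 : A))))
      = Ideal.span
          {∏ i ∈ Finset.range (n + 1),
            (Polynomial.X + Polynomial.C ((1 - algebraMap R A q ^ i) * x))} := by
  set S := Polynomial R
  set qA : A := algebraMap R A q with hqA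
  set c : A := qA - 1 with hc
  -- algebraMap S A as aeval
  have h1 : ∀ p : S, algebraMap S A p = Polynomial.aeval x p := by
    intro p
    have : (IsScalarTower.toAlgHom R S A) = Polynomial.aeval x := by
      apply Polynomial.algHom_ext
      simp [hx]
      rfl
    exact (DFunLike.congr_fun this p : _)
  -- sigma powers
  have hσpow : ∀ i : ℕ, (σ ^ i) x = qA ^ i * x := by
    intro i
    induction i with
    | zero => simp
    | succ k ih =>
      rw [pow_succ, AlgHom.mul_apply, hσx, map_mul, ih, (σ ^ k).commutes q]
      ring
  have hσsub : ∀ (i : ℕ) (a : A), (σ ^ i) a - a ∈ Ideal.span {c} := by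
    intro i
    induction i with
    | zero => simp
    | succ k ih =>
      intro a
      have : (σ ^ (k+1)) a - a = ((σ ^ k) (σ a) - σ a) + (σ a - a) := by
        rw [pow_succ, AlgHom.mul_apply]; ring
      rw [this]
      exact add_mem (ih (σ a)) (hσ a)
  -- tau powers
  have hτpow : ∀ (i : ℕ) (a b : A), (τ ^ i) (a ⊗ₜ[R] b) = ((σ ^ i) a) ⊗ₜ[R] b := by
    intro i
    induction i with
    | zero => intro a b; simp
    | succ k ih =>
      intro a b
      have hτt : τ (a ⊗ₜ[R] b) = (σ a) ⊗ₜ[R] b := by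
        rw [hτ]; simp
      rw [pow_succ, AlgHom.mul_apply, hτt, ih, pow_succ, AlgHom.mul_apply]
  -- generators of I
  have hGen : I = Ideal.span (Set.range fun a : A => (1:A) ⊗ₜ[R] a - a ⊗ₜ[R] (1:A)) := by
    rw [hI]
    exact (KaehlerDifferential.span_range_eq_ideal R A).symm
  have hgx : (1:A) ⊗ₜ[R] x - x ⊗ₜ[R] (1:A) ∈ I := by
    rw [hGen]; exact Ideal.subset_span ⟨x, rfl⟩
  have hτgen : ∀ (i : ℕ) (a : A),
      (τ ^ i) ((1:A) ⊗ₜ[R] a - a ⊗ₜ[R] (1:A)) = (1:A) ⊗ₜ[R] a - ((σ ^ i) a) ⊗ₜ[R] (1:A) := by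
    intro i a
    rw [map_sub, hτpow, hτpow, map_one]
  have hqi : ∀ i : ℕ, qA ^ i - 1 ∈ Ideal.span {c} := by
    intro i
    induction i with
    | zero => simp
    | succ k ih =>
      have : qA ^ (k+1) - 1 = qA ^ k * (qA - 1) + (qA ^ k - 1) := by ring
      rw [this]
      exact add_mem (Ideal.mul_mem_left _ _ (Ideal.subset_span rfl)) ih
  -- ============ Step A : nilpotency of image of I in B ============
  set T := A ⊗[R] A with hT
  set P : Ideal T := ∏ i ∈ Finset.range (n+1), Ideal.map (τ ^ i) I with hP
  set c' : T := c ⊗ₜ[R] (1:A) with hc'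
  have hc'nil : IsNilpotent c' := by
    obtain ⟨m, hm⟩ := hq
    exact ⟨m, by rw [hc', Algebra.TensorProduct.tmul_pow, hm, one_pow,
      TensorProduct.zero_tmul]⟩
  have hIJ : ∀ i : ℕ, I ≤ Ideal.map (τ ^ i) I + Ideal.span {c'} := by
    intro i
    conv_lhs => rw [hGen]
    rw [Ideal.span_le]
    rintro _ ⟨a, rfl⟩
    show (1:A) ⊗ₜ[R] a - a ⊗ₜ[R] (1:A) ∈ _
    have key : (1:A) ⊗ₜ[R] a - a ⊗ₜ[R] (1:A)
        = (τ ^ i) ((1:A) ⊗ₜ[R] a - a ⊗ₜ[R] (1:A)) + ((σ ^ i) a - a) ⊗ₜ[R] (1:A) := by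
      rw [hτgen, TensorProduct.sub_tmul]; ring
    rw [key]
    refine add_mem (Submodule.mem_sup_left (Ideal.mem_map_of_mem _
      (hGen ▸ Ideal.subset_span ⟨a, rfl⟩))) (Submodule.mem_sup_right ?_)
    obtain ⟨r, hr⟩ := Ideal.mem_span_singleton.mp (hσsub i a)
    rw [hr, Ideal.mem_span_singleton]
    exact ⟨r ⊗ₜ[R] 1, by rw [hc', Algebra.TensorProduct.tmul_mul_tmul, one_mul]⟩
  have hIpow : I ^ (n+1) ≤ P + Ideal.span {c'} := by
    have h5 := aux_prod_le (Finset.range (n+1)) I (fun i => Ideal.map (τ ^ i) I)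
      (Ideal.span {c'}) (fun i _ => hIJ i)
    rwa [Finset.card_range] at h5
  set mkP := Ideal.Quotient.mk P with hmkP
  have hKnil : IsNilpotent (Ideal.map mkP I) := by
    obtain ⟨m, hm⟩ := hc'nil
    refine ⟨(n+1) * m, ?_⟩
    rw [show Ideal.map mkP I ^ ((n + 1) * m) = (Ideal.map mkP I ^ (n+1)) ^ m from pow_mul (Ideal.map mkP I) (n+1) m, ← Ideal.map_pow]
    have h2 : Ideal.map mkP (I ^ (n+1)) ≤ Ideal.span {mkP c'} := by
      refine le_trans (Ideal.map_mono hIpow) ?_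
      rw [Submodule.add_eq_sup, Ideal.map_sup, Ideal.map_quotient_self, Ideal.map_span, Set.image_singleton]
      rw [bot_sup_eq]
    have h3 : Ideal.span {mkP c'} ^ m = ⊥ := by
      rw [Ideal.span_singleton_pow, ← map_pow, hm, map_zero,
        Ideal.span_singleton_eq_bot.mpr rfl]
    have h8 : Ideal.map mkP (I ^ (n+1)) ^ m ≤ ⊥ := h3 ▸ Ideal.pow_right_mono h2 m
    rw [Ideal.zero_eq_bot]
    exact le_bot_iff.mp h8
  -- ============ Step B : the polynomial side ============
  set f : Polynomial A := ∏ i ∈ Finset.range (n+1),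
    ((X : Polynomial A) + C ((1 - qA ^ i) * x)) with hf
  set Jf : Ideal (Polynomial A) := Ideal.span {f} with hJf
  set mkC := Ideal.Quotient.mk Jf with hmkC
  have hfX : f ∈ Ideal.span {(X : Polynomial A)} := by
    rw [hf, Finset.prod_range_succ']
    have h6 : ((X : Polynomial A) + C ((1 - qA ^ 0) * x)) = X := by simp
    rw [h6, Ideal.mem_span_singleton]
    exact dvd_mul_left _ _
  have hmkCf : mkC f = 0 := Ideal.Quotient.eq_zero_iff_mem.mpr (Ideal.subset_span rfl)
  have hei : ∀ i, (1 - qA ^ i) * x ∈ Ideal.span {c} := by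
    intro i
    rw [Ideal.mem_span_singleton]
    refine dvd_mul_of_dvd_left ?_ x
    have := Ideal.mem_span_singleton.mp (hqi i)
    rwa [← dvd_neg, neg_sub] at this
  have hξnil : IsNilpotent (mkC X) := by
    have h4 := aux_prod_sub_pow c (Finset.range (n+1)) (fun i => (1 - qA ^ i) * x)
      (fun i _ => hei i)
    rw [Finset.card_range, ← hf] at h4
    obtain ⟨t, ht⟩ := Ideal.mem_span_singleton.mp h4
    obtain ⟨m, hm⟩ := hq
    refine ⟨(n+1) * m, ?_⟩
    have hXn : (mkC X) ^ (n+1) = mkC (C c * (-t)) := by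
      rw [← map_pow]
      have h7 : (X : Polynomial A) ^ (n+1) = f + C c * (-t) := by
        have := sub_eq_iff_eq_add.mp ht
        rw [mul_neg]
        linear_combination -this
      rw [h7, map_add, hmkCf, zero_add]
    rw [pow_mul, hXn, ← map_pow, mul_pow, ← map_pow, hm, map_zero, zero_mul, map_zero]
  have hJxinil : IsNilpotent (Ideal.span {mkC X}) := aux_span_nilpotent hξnil
  -- ============ twisted S-algebra structure ============
  set Cq := Polynomial A ⧸ Jf with hCq
  set E : Polynomial R →ₐ[R] Polynomial A := Polynomial.aeval ((X : Polynomial A) + C x) with hE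
  letI algSC : Algebra S Cq := (mkC.comp (E : Polynomial R →+* Polynomial A)).toAlgebra
  have halgSC : ∀ p : S, algebraMap S Cq p = mkC (E p) := fun p => rfl
  have hEX : E X = (X : Polynomial A) + C x := by rw [hE]; simp
  have halgR : ∀ r : R, algebraMap S Cq (algebraMap R S r) = algebraMap R Cq r := fun r => by
    rw [halgSC, E.commutes r]
    rfl
  set Jxi : Ideal Cq := Ideal.span {mkC X} with hJxi
  set mkD0 := Ideal.Quotient.mk Jxi with hmkD0
  letI algD0 : Algebra S (Cq ⧸ Jxi) := Ideal.Quotient.algebra S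
  have hgcomm : ∀ p : S, mkD0 (mkC (C (algebraMap S A p))) = @algebraMap S (Cq ⧸ Jxi) _ _ algD0 p := by
    intro p
    have e1 : @algebraMap S (Cq ⧸ Jxi) _ _ algD0 p = mkD0 (algebraMap S Cq p) :=
      rfl
    rw [e1, halgSC]
    have main : (((Ideal.Quotient.mkₐ R Jxi).comp (Ideal.Quotient.mkₐ R Jf)).comp
        (Polynomial.CAlgHom.comp (IsScalarTower.toAlgHom R S A)))
        = (((Ideal.Quotient.mkₐ R Jxi).comp (Ideal.Quotient.mkₐ R Jf)).comp E) := by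
      apply Polynomial.algHom_ext
      show mkD0 (mkC (C (algebraMap S A X))) = mkD0 (mkC (E X))
      rw [hEX, ← hx, Ideal.Quotient.eq]
      have h7 : mkC (C x) - mkC ((X : Polynomial A) + C x) = -(mkC X) := by
        rw [← map_sub, ← map_neg]; congr 1; ring
      rw [h7]
      exact neg_mem (Ideal.subset_span rfl)
    exact DFunLike.congr_fun main p
  obtain ⟨ρ, hρ⟩ : ∃ ρ : A →ₐ[S] Cq, ∀ a : A,
      Ideal.Quotient.mk Jxi (ρ a) = Ideal.Quotient.mk Jxi (mkC (C a)) := by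
    refine ⟨Algebra.FormallySmooth.lift Jxi hJxinil
      ⟨(mkD0.comp mkC).comp (Polynomial.C : A →+* Polynomial A), hgcomm⟩, fun a => ?_⟩
    exact Algebra.FormallySmooth.mk_lift Jxi hJxinil _ a
  have hρS : ∀ p : S, ρ (algebraMap S A p) = mkC (E p) := fun p => ρ.commutes p
  have hρx : ρ x = mkC ((X : Polynomial A) + C x) := by
    have h8 := hρS X
    rw [← hx] at h8
    rwa [hEX] at h8
  have hρmem : ∀ a : A, ρ a - mkC (C a) ∈ Jxi := fun a => Ideal.Quotient.eq.mp (hρ a)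
  -- ============ Step 5 : comparison with σ^i ============
  have hρσ : ∀ (i : ℕ) (a : A), ρ a - mkC (C ((σ ^ i) a))
      ∈ Ideal.span {mkC ((X : Polynomial A) + C ((1 - qA ^ i) * x))} := by
    intro i
    set w : Cq := mkC ((X : Polynomial A) + C ((1 - qA ^ i) * x)) with hw
    set Di := Cq ⧸ Ideal.span {w} with hDi
    letI : CommRing Di := Ideal.Quotient.commRing _
    set mkD := Ideal.Quotient.mk (Ideal.span {w}) with hmkD
    letI algDi : Algebra S Di := Ideal.Quotient.algebra S
    have hvcomm : ∀ p : S, mkD (mkC (C ((σ ^ i) (algebraMap S A p)))) = @algebraMap S Di _ _ algDi p := by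
      intro p
      have e1 : @algebraMap S Di _ _ algDi p = mkD (algebraMap S Cq p) :=
        rfl
      rw [e1, halgSC]
      have main : (((Ideal.Quotient.mkₐ R (Ideal.span {w})).comp (Ideal.Quotient.mkₐ R Jf)).comp
          (Polynomial.CAlgHom.comp ((σ ^ i).comp (IsScalarTower.toAlgHom R S A))))
          = (((Ideal.Quotient.mkₐ R (Ideal.span {w})).comp (Ideal.Quotient.mkₐ R Jf)).comp E) := by
        apply Polynomial.algHom_ext
        show mkD (mkC (C ((σ ^ i) (algebraMap S A X)))) = mkD (mkC (E X))
        rw [hEX, ← hx, hσpow i]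
        have hpoly : (C (qA ^ i * x) : Polynomial A) - ((X : Polynomial A) + C x)
            = -((X : Polynomial A) + C ((1 - qA ^ i) * x)) := by
          rw [sub_mul, one_mul, map_sub]; ring
        have h7 : mkC (C (qA ^ i * x)) - mkC ((X : Polynomial A) + C x) = -w := by
          rw [hw, ← map_sub, ← map_neg, hpoly]
        refine Ideal.Quotient.eq.mpr ?_
        rw [h7]
        exact neg_mem (Ideal.subset_span rfl)
      exact DFunLike.congr_fun main p
    set u : A →ₐ[S] Di := (Ideal.Quotient.mkₐ S (Ideal.span {w})).comp ρ with hu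
    set v : A →ₐ[S] Di :=
      ⟨((mkD.comp mkC).comp (Polynomial.C : A →+* Polynomial A)).comp
        ((σ ^ i : A →ₐ[R] A) : A →+* A), fun p => hvcomm p⟩ with hv
    set N : Ideal Di := Ideal.span {mkD (mkC X)} + Ideal.span {mkD (mkC (C c))} with hN
    have hNnil : IsNilpotent N := by
      refine Commute.isNilpotent_add (Commute.all _ _) (aux_span_nilpotent ?_)
        (aux_span_nilpotent ?_)
      · exact hξnil.map mkD
      · exact ((hq.map (C : A →+* Polynomial A)).map mkC).map mkD
    have hagree : ∀ a : A, Ideal.Quotient.mk N (u a) = Ideal.Quotient.mk N (v a) := by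
      intro a
      rw [Ideal.Quotient.eq]
      have hua : u a = mkD (ρ a) := rfl
      have hva : v a = mkD (mkC (C ((σ ^ i) a))) := rfl
      have m1 : mkD (ρ a) - mkD (mkC (C a)) ∈ Ideal.span {mkD (mkC X)} := by
        rw [← map_sub]
        exact Ideal.mem_span_singleton.mpr
          (map_dvd mkD (Ideal.mem_span_singleton.mp (hρmem a)))
      have m2 : mkD (mkC (C ((σ ^ i) a))) - mkD (mkC (C a)) ∈ Ideal.span {mkD (mkC (C c))} := by
        rw [← map_sub, ← map_sub, ← map_sub]
        exact Ideal.mem_span_singleton.mpr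
          (map_dvd mkD (map_dvd mkC (map_dvd (C : A →+* Polynomial A)
            (Ideal.mem_span_singleton.mp (hσsub i a)))))
      have hdiff : u a - v a = (mkD (ρ a) - mkD (mkC (C a)))
          - (mkD (mkC (C ((σ ^ i) a))) - mkD (mkC (C a))) := by
        rw [hua, hva]; ring
      rw [hdiff]
      exact sub_mem (Submodule.mem_sup_left m1) (Submodule.mem_sup_right m2)
    have huv : u = v := Algebra.FormallyUnramified.ext N hNnil hagree
    intro a
    have h9 : mkD (ρ a) = mkD (mkC (C ((σ ^ i) a))) := DFunLike.congr_fun huv a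
    exact Ideal.Quotient.eq.mp h9
  -- ============ the map ψ : T →ₐ[R] Cq ============
  set P1 : A →ₐ[R] Cq := (Ideal.Quotient.mkₐ R Jf).comp (Polynomial.CAlgHom) with hP1
  have hρRcomm : ∀ r : R, ρ (algebraMap R A r) = algebraMap R Cq r := fun r => by
    rw [IsScalarTower.algebraMap_apply R S A r, hρS, E.commutes r]
    rfl
  set ρR : A →ₐ[R] Cq := ⟨ρ.toRingHom, fun r => hρRcomm r⟩ with hρR
  set ψ : T →ₐ[R] Cq := Algebra.TensorProduct.productMap P1 ρR with hψdef
  have hψtmul : ∀ a b : A, ψ (a ⊗ₜ[R] b) = mkC (C a) * ρ b := fun a b => by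
    rw [hψdef]
    exact Algebra.TensorProduct.productMap_apply_tmul P1 ρR a b
  have hψP : ∀ t ∈ P, ψ t = 0 := by
    have hle : Ideal.map (ψ : T →+* Cq) P ≤ ⊥ := by
      rw [hP]
      have e2 : Ideal.map (ψ : T →+* Cq) (∏ i ∈ Finset.range (n+1), Ideal.map (τ ^ i) I)
          = ∏ i ∈ Finset.range (n+1), Ideal.map (ψ : T →+* Cq) (Ideal.map (τ ^ i) I) :=
        map_prod (Ideal.mapHom (ψ : T →+* Cq)) _ _
      rw [e2]
      have e3 : ∀ i ∈ Finset.range (n+1), Ideal.map (ψ : T →+* Cq) (Ideal.map (τ ^ i) I)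
          ≤ Ideal.span {mkC ((X : Polynomial A) + C ((1 - qA ^ i) * x))} := by
        intro i _
        refine Ideal.map_le_iff_le_comap.mpr ?_
        refine Ideal.map_le_iff_le_comap.mpr ?_
        rw [hGen, Ideal.span_le]
        rintro _ ⟨a, rfl⟩
        show (1:A) ⊗ₜ[R] a - a ⊗ₜ[R] (1:A) ∈ _
        rw [SetLike.mem_coe, Ideal.mem_comap, Ideal.mem_comap, hτgen i a]
        have e4 : ψ ((1:A) ⊗ₜ[R] a - ((σ ^ i) a) ⊗ₜ[R] (1:A))
            = ρ a - mkC (C ((σ ^ i) a)) := by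
          rw [map_sub, hψtmul, hψtmul]
          simp only [map_one, one_mul, mul_one]
        have e4' : ψ ((1:A) ⊗ₜ[R] a - ((σ ^ i) a) ⊗ₜ[R] (1:A))
            ∈ Ideal.span {mkC ((X : Polynomial A) + C ((1 - qA ^ i) * x))} := by
          rw [e4]; exact hρσ i a
        exact e4'
      refine le_trans (aux_prod_mono _ _ _ e3) ?_
      rw [Ideal.prod_span_singleton]
      have e5 : (∏ i ∈ Finset.range (n+1), mkC ((X : Polynomial A) + C ((1 - qA ^ i) * x)))
          = mkC f := by
        rw [hf, map_prod]
      rw [e5, hmkCf, Ideal.span_singleton_eq_bot.mpr rfl]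
    intro t ht
    have := hle (Ideal.mem_map_of_mem (ψ : T →+* Cq) ht)
    simpa using this
  set ψq : (T ⧸ P) →ₐ[R] Cq := Ideal.Quotient.liftₐ P ψ hψP with hψq
  have hψqmk : ∀ t : T, ψq (mkP t) = ψ t := fun t => by
    rw [hψq]
    exact Ideal.Quotient.lift_mk P _ _
  -- ============ φ and its kernel ============
  set δ : T ⧸ P := mkP ((1:A) ⊗ₜ[R] x - x ⊗ₜ[R] (1:A)) with hδ
  set φ : Polynomial A →ₐ[A] (T ⧸ P) := Polynomial.aeval (R := A) δ with hφ
  have halgB : ∀ a : A, algebraMap A (T ⧸ P) a = mkP (a ⊗ₜ[R] (1:A)) := fun a => rfl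
  have hφC : ∀ a : A, φ (C a) = mkP (a ⊗ₜ[R] (1:A)) := fun a => by
    rw [hφ, Polynomial.aeval_C]
    exact halgB a
  have hφXCe : ∀ i : ℕ, φ ((X : Polynomial A) + C ((1 - qA ^ i) * x))
      = mkP ((τ ^ i) ((1:A) ⊗ₜ[R] x - x ⊗ₜ[R] (1:A))) := by
    intro i
    rw [map_add, hφ, Polynomial.aeval_X, ← hφ, hφC, hδ, ← map_add]
    congr 1
    rw [hτgen i x, hσpow i]
    have e6 : ((1 - qA ^ i) * x) = x - qA ^ i * x := by ring
    rw [e6, TensorProduct.sub_tmul]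
    abel
  have hφf : φ f = 0 := by
    rw [hf, map_prod]
    rw [Finset.prod_congr rfl (fun i _ => hφXCe i), ← map_prod mkP]
    refine Ideal.Quotient.eq_zero_iff_mem.mpr ?_
    rw [hP]
    exact Ideal.prod_mem_prod (fun i _ => Ideal.mem_map_of_mem _ hgx)
  have hcomp : ∀ p : Polynomial A, ψq (φ p) = mkC p := by
    have hcommA : ∀ a : A, ψq (φ (C a)) = algebraMap A Cq a := by
      intro a
      rw [hφC, hψqmk, hψtmul]
      simp only [map_one, mul_one]
      rfl
    set Φ : Polynomial A →ₐ[A] Cq := ⟨ψq.toRingHom.comp φ.toRingHom,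
      fun a => hcommA a⟩ with hΦ
    have main : Φ = Ideal.Quotient.mkₐ A Jf := by
      apply Polynomial.algHom_ext
      show ψq (φ X) = mkC X
      rw [hφ, Polynomial.aeval_X, hδ, hψqmk, map_sub, hψtmul, hψtmul]
      simp only [map_one, one_mul, mul_one]
      rw [hρx, ← map_sub]
      congr 1
      ring
    intro p
    exact DFunLike.congr_fun main p
  have hker : RingHom.ker φ = Ideal.span {f} := by
    apply le_antisymm
    · intro p hp
      rw [RingHom.mem_ker] at hp
      have h0 : ψq (φ p) = 0 := by rw [hp, map_zero]
      rw [hcomp p] at h0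
      exact Ideal.Quotient.eq_zero_iff_mem.mp h0
    · rw [Ideal.span_le, Set.singleton_subset_iff]
      exact RingHom.mem_ker.mpr hφf
  -- ============ θ : Cq → T ⧸ P and surjectivity ============
  have hθ0 : ∀ p ∈ Jf, φ p = 0 := by
    intro p hp
    have hp' : p ∈ Ideal.span {f} := hJf ▸ hp
    obtain ⟨t, rfl⟩ := Ideal.mem_span_singleton.mp hp'
    rw [map_mul, hφf, zero_mul]
  set θ : Cq →ₐ[A] (T ⧸ P) := Ideal.Quotient.liftₐ Jf φ hθ0 with hθdef
  have hθmk : ∀ p : Polynomial A, θ (mkC p) = φ p := fun p => by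
    rw [hθdef]
    exact Ideal.Quotient.lift_mk Jf _ _
  -- R-algebra hom facts for φ
  have hφR : ∀ r : R, φ (algebraMap R (Polynomial A) r) = algebraMap R (T ⧸ P) r := by
    intro r
    have e7 : algebraMap R (Polynomial A) r = C (algebraMap R A r) := rfl
    rw [e7, hφC]
    rfl
  have hθR : ∀ r : R, θ (algebraMap R Cq r) = algebraMap R (T ⧸ P) r := by
    intro r
    have e8 : algebraMap R Cq r = mkC (algebraMap R (Polynomial A) r) := rfl
    rw [e8, hθmk]
    exact hφR r
  -- S-algebra structure on T ⧸ P via right inclusion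
  letI algSB : Algebra S (T ⧸ P) :=
    ((mkP.comp ((Algebra.TensorProduct.includeRight : A →ₐ[R] T) : A →+* T)).comp
      (algebraMap S A)).toAlgebra
  have halgSB : ∀ p : S, algebraMap S (T ⧸ P) p = mkP ((1:A) ⊗ₜ[R] (algebraMap S A p)) :=
    fun p => rfl
  set u' : A →ₐ[S] (T ⧸ P) :=
    ⟨mkP.comp ((Algebra.TensorProduct.includeRight : A →ₐ[R] T) : A →+* T),
      fun p => rfl⟩ with hu'
  have hv'comm : ∀ p : S, θ (ρ (algebraMap S A p)) = algebraMap S (T ⧸ P) p := by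
    intro p
    rw [hρS p, hθmk, halgSB]
    -- two R-algebra maps out of S = R[X]
    set φR : Polynomial A →ₐ[R] (T ⧸ P) := ⟨φ.toRingHom, fun r => hφR r⟩ with hφRdef
    have main : φR.comp E = (Ideal.Quotient.mkₐ R P).comp
        ((Algebra.TensorProduct.includeRight : A →ₐ[R] T).comp
          (IsScalarTower.toAlgHom R S A)) := by
      apply Polynomial.algHom_ext
      show φ (E X) = mkP ((1:A) ⊗ₜ[R] (algebraMap S A X))
      rw [hEX, ← hx, map_add, hφ, Polynomial.aeval_X, ← hφ, hφC, hδ, ← map_add]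
      congr 1
      abel
    have := DFunLike.congr_fun main p
    exact this
  set v' : A →ₐ[S] (T ⧸ P) := ⟨θ.toRingHom.comp ρ.toRingHom, fun p => hv'comm p⟩ with hv'
  set K : Ideal (T ⧸ P) := Ideal.map mkP I with hK
  have hagree' : ∀ a : A, Ideal.Quotient.mk K (u' a) = Ideal.Quotient.mk K (v' a) := by
    intro a
    rw [Ideal.Quotient.eq]
    have hua : u' a = mkP ((1:A) ⊗ₜ[R] a) := rfl
    have hva : v' a = θ (ρ a) := rfl
    obtain ⟨r, hr⟩ := Ideal.mem_span_singleton.mp (hJxi ▸ hρmem a)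
    have hρa : ρ a = mkC (C a) + mkC X * r := by
      rw [← hr]; ring
    have hθρ : θ (ρ a) = mkP (a ⊗ₜ[R] (1:A)) + δ * θ r := by
      rw [hρa, map_add, map_mul, hθmk, hθmk, hφC]
      congr 2
      rw [hφ, Polynomial.aeval_X, hδ]
    have hdiff : u' a - v' a = mkP ((1:A) ⊗ₜ[R] a - a ⊗ₜ[R] (1:A)) - δ * θ r := by
      rw [hua, hva, hθρ, map_sub]; ring
    rw [hdiff]
    refine sub_mem (Ideal.mem_map_of_mem mkP (hGen ▸ Ideal.subset_span ⟨a, rfl⟩)) ?_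
    refine Ideal.mul_mem_right _ _ ?_
    rw [hδ]
    exact Ideal.mem_map_of_mem mkP hgx
  have huv' : u' = v' := Algebra.FormallyUnramified.ext K hKnil hagree'
  have hθψ : ∀ t : T, θ (ψ t) = mkP t := by
    set θR : Cq →ₐ[R] (T ⧸ P) := ⟨θ.toRingHom, fun r => hθR r⟩ with hθRdef
    have main2 : θR.comp ψ = Ideal.Quotient.mkₐ R P := by
      apply Algebra.TensorProduct.ext
      · apply AlgHom.ext
        intro a
        show θ (ψ (a ⊗ₜ[R] (1:A))) = mkP (a ⊗ₜ[R] (1:A))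
        rw [hψtmul, map_one, mul_one, hθmk, hφC]
      · apply AlgHom.ext
        intro a
        show θ (ψ ((1:A) ⊗ₜ[R] a)) = mkP ((1:A) ⊗ₜ[R] a)
        rw [hψtmul]
        simp only [map_one, one_mul]
        have e9 : θ (ρ a) = mkP ((1:A) ⊗ₜ[R] a) := (DFunLike.congr_fun huv' a).symm
        exact e9
    intro t
    exact DFunLike.congr_fun main2 t
  have hsurj : Function.Surjective φ := by
    intro b
    obtain ⟨t, rfl⟩ := Ideal.Quotient.mk_surjective (I := P) b
    obtain ⟨p, hp⟩ := Ideal.Quotient.mk_surjective (I := Jf) (ψ t)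
    refine ⟨p, ?_⟩
    have e10 : θ (mkC p) = φ p := hθmk p
    rw [← e10, hp, hθψ]
  exact ⟨hsurj, hker⟩
end

section
/- Let p be a prime number, let R be a commutative ring equipped with a ring endomorphism φ_R such that φ_R(r) ≡ r^p (mod pR) for all r ∈ R (a Frobenius lift). Let A be a commutative R-algebra with a formally étale structure map R[X] → A, let x ∈ A be the image of X, and assume A is p-adically complete (complete and separated for the pA-adic topology). Then there exists a unique ring endomorphism φ_A of A such that: (i) φ_A ∘ (algebraMap R A) = (algebraMap R A) ∘ φ_R; (ii) φ_A(a) ≡ a^p (mod pA) for all a ∈ A; and (iii) φ_A(x) = x^p. -/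
open Polynomial

universe u

/-- Frobenius followed by the quotient map, as a ring hom. -/
def frobToQuot (p : ℕ) (hp : p.Prime) (A : Type u) [CommRing A]
    (I : Ideal A) (hpI : (p : A) ∈ I) : A →+* A ⧸ I where
  toFun a := Ideal.Quotient.mk I (a ^ p)
  map_one' := by simp
  map_mul' a b := by simp [mul_pow]
  map_zero' := by simp [zero_pow hp.ne_zero]
  map_add' a b := by
    obtain ⟨r, hr⟩ := exists_add_pow_prime_eq hp a b
    have : Ideal.Quotient.mk I ((p : A) * r) = 0 := by
      rw [Ideal.Quotient.eq_zero_iff_mem]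
      exact I.mul_mem_right r hpI
    have hp0 : ((p : A ⧸ I)) = 0 := by
      rw [← map_natCast (Ideal.Quotient.mk I)]; exact Ideal.Quotient.eq_zero_iff_mem.mpr hpI
    simp [hr, map_add, map_mul, this, hp0]

@[simp] theorem frobToQuot_apply (p : ℕ) (hp : p.Prime) (A : Type u) [CommRing A]
    (I : Ideal A) (hpI : (p : A) ∈ I) (a : A) :
    frobToQuot p hp A I hpI a = Ideal.Quotient.mk I (a ^ p) := rfl

/-- Unique lifting of ring homs along nilpotent ideals for formally étale algebras. -/
theorem auxLift (P A B : Type u) [CommRing P] [CommRing A] [CommRing B]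
    [Algebra P A] [Algebra.FormallyEtale P A]
    (ψ : P →+* B) (J : Ideal B) (hJ : IsNilpotent J)
    (g : A →+* B ⧸ J)
    (hg : g.comp (algebraMap P A) = (Ideal.Quotient.mk J).comp ψ) :
    ∃! g' : A →+* B, (Ideal.Quotient.mk J).comp g' = g ∧ g'.comp (algebraMap P A) = ψ := by
  letI : Algebra P B := ψ.toAlgebra
  have halg : (algebraMap P (B ⧸ J)) = (Ideal.Quotient.mk J).comp ψ := rfl
  let gA : A →ₐ[P] B ⧸ J :=
    { toRingHom := g, commutes' := fun f => by
        rw [halg]; exact (RingHom.congr_fun hg f) }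
  let lA : A →ₐ[P] B := Algebra.FormallySmooth.lift J hJ gA
  have hlA : (Ideal.Quotient.mkₐ P J).comp lA = gA := Algebra.FormallySmooth.comp_lift J hJ gA
  refine ⟨lA.toRingHom, ⟨?_, ?_⟩, ?_⟩
  · ext a
    exact AlgHom.congr_fun hlA a
  · ext f
    exact lA.commutes f
  · rintro g' ⟨h1, h2⟩
    let g'A : A →ₐ[P] B :=
      { toRingHom := g', commutes' := fun f => (RingHom.congr_fun h2 f) }
    have : g'A = lA := by
      apply Algebra.FormallyUnramified.ext J hJ
      intro a
      have e1 : Ideal.Quotient.mk J (g'A a) = g a := RingHom.congr_fun h1 a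
      have e2 : Ideal.Quotient.mk J (lA a) = g a := AlgHom.congr_fun hlA a
      rw [e1, e2]
    exact congrArg AlgHom.toRingHom this


/-- A Frobenius lift on `R` extends uniquely to a `p`-adically complete algebra `A` with a
topologically étale coordinate `x`, in such a way that `x` has rank one (`φ(x) = x^p`). -/
theorem exists_unique_frobenius_lift
    (p : ℕ) (hp : p.Prime)
    (R A : Type u) [CommRing R]
    (φR : R →+* R) (hφR : ∀ r : R, φR r - r ^ p ∈ Ideal.span {(p : R)})
    [CommRing A] [Algebra R A]
    [Algebra (Polynomial R) A] [IsScalarTower R (Polynomial R) A]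
    [Algebra.FormallyEtale (Polynomial R) A]
    (x : A) (hx : x = algebraMap (Polynomial R) A Polynomial.X)
    [IsAdicComplete (Ideal.span {(p : A)}) A] :
    ∃! φA : A →+* A,
      φA.comp (algebraMap R A) = (algebraMap R A).comp φR ∧
      (∀ a : A, φA a - a ^ p ∈ Ideal.span {(p : A)}) ∧
      φA x = x ^ p := by
    classical
  -- record completeness facts before abbreviating the ideal
  have hprec := fun (f : ℕ → A) =>
    (IsAdicComplete.toIsPrecomplete (I := Ideal.span {(p : A)}) (M := A)).prec (f := f)
  have hhaus := (IsAdicComplete.toIsHausdorff (I := Ideal.span {(p : A)}) (M := A)).haus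
  set I : Ideal A := Ideal.span {(p : A)} with hIdef
  have hpI : (p : A) ∈ I := Ideal.subset_span rfl
  set ψ : Polynomial R →+* A :=
    Polynomial.eval₂RingHom ((algebraMap R A).comp φR) (x ^ p) with hψdef
  have hψC : ∀ r : R, ψ (Polynomial.C r) = algebraMap R A (φR r) := fun r => by
    simp [hψdef]
  have hψX : ψ Polynomial.X = x ^ p := by simp [hψdef]
  have halgC : ∀ r : R, algebraMap (Polynomial R) A (Polynomial.C r) = algebraMap R A r := by
    intro r
    rw [← Polynomial.algebraMap_eq, ← IsScalarTower.algebraMap_apply]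
  -- Hausdorff consequence
  have eq_of : ∀ c d : A, (∀ n : ℕ, Ideal.Quotient.mk (I ^ (n + 1)) c
      = Ideal.Quotient.mk (I ^ (n + 1)) d) → c = d := by
    intro c d h
    have h0 : ∀ n : ℕ, c - d ≡ 0 [SMOD (I ^ n • ⊤ : Submodule A A)] := by
      intro n
      rw [SModEq.zero, smul_eq_mul, Ideal.mul_top]
      exact Ideal.pow_le_pow_right (Nat.le_succ n) (Ideal.Quotient.eq.mp (h n))
    have := hhaus (c - d) h0
    exact sub_eq_zero.mp this
  -- the key compatibility mod p
  have L1 : (frobToQuot p hp A I hpI).comp (algebraMap (Polynomial R) A)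
      = (Ideal.Quotient.mk I).comp ψ := by
    apply Polynomial.ringHom_ext
    · intro r
      simp only [RingHom.comp_apply, halgC, hψC, frobToQuot_apply]
      rw [Ideal.Quotient.eq]
      obtain ⟨c, hc⟩ := Ideal.mem_span_singleton'.mp (hφR r)
      have : (algebraMap R A r) ^ p - algebraMap R A (φR r)
          = -(algebraMap R A c * (p : A)) := by
        rw [← map_pow, ← map_natCast (algebraMap R A) p, ← map_mul, ← map_neg, ← map_sub]
        congr 1
        rw [hc]
        ring
      rw [this]
      exact I.neg_mem (I.mul_mem_left _ hpI)
    · simp only [RingHom.comp_apply, hψX, frobToQuot_apply, ← hx]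
  have hle : ∀ n : ℕ, I ^ (n + 1) ≤ I := fun n => Ideal.pow_le_self (Nat.succ_ne_zero n)
  -- the level-n unique liftings
  have H : ∀ n : ℕ, ∃! g' : A →+* A ⧸ I ^ (n + 1),
      (Ideal.Quotient.mk (I.map (Ideal.Quotient.mk (I ^ (n + 1))))).comp g'
        = ((DoubleQuot.quotQuotEquivQuotOfLE (hle n)).symm.toRingHom).comp
            (frobToQuot p hp A I hpI) ∧
      g'.comp (algebraMap (Polynomial R) A)
        = (Ideal.Quotient.mk (I ^ (n + 1))).comp ψ := by
    intro n
    refine auxLift (Polynomial R) A (A ⧸ I ^ (n + 1))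
      ((Ideal.Quotient.mk (I ^ (n + 1))).comp ψ)
      (I.map (Ideal.Quotient.mk (I ^ (n + 1))))
      ⟨n + 1, by rw [← Ideal.map_pow, Ideal.map_quotient_self]; rfl⟩
      (((DoubleQuot.quotQuotEquivQuotOfLE (hle n)).symm.toRingHom).comp
        (frobToQuot p hp A I hpI)) ?_
    rw [RingHom.comp_assoc, L1, ← RingHom.comp_assoc]
    refine RingHom.ext fun f => ?_
    simp only [RingHom.comp_apply, RingEquiv.toRingHom_eq_coe, RingHom.coe_coe]
    rw [DoubleQuot.quotQuotEquivQuotOfLE_symm_mk]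
    rfl
  choose g hg using H
  have hg1 : ∀ (n : ℕ) (a : A),
      Ideal.Quotient.mk (I.map (Ideal.Quotient.mk (I ^ (n + 1)))) (g n a)
        = (DoubleQuot.quotQuotEquivQuotOfLE (hle n)).symm
            (Ideal.Quotient.mk I (a ^ p)) :=
    fun n a => RingHom.congr_fun (hg n).1.1 a
  have hg2 : ∀ (n : ℕ) (f : Polynomial R),
      g n (algebraMap (Polynomial R) A f) = Ideal.Quotient.mk (I ^ (n + 1)) (ψ f) :=
    fun n f => RingHom.congr_fun (hg n).1.2 f
  -- representatives reduce correctly mod I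
  have K4 : ∀ (n : ℕ) (a y : A), Ideal.Quotient.mk (I ^ (n + 1)) y = g n a →
      y - a ^ p ∈ I := by
    intro n a y hy
    have h1 := hg1 n a
    rw [← hy] at h1
    have h1' : DoubleQuot.quotQuotMk (I ^ (n + 1)) I y
        = (DoubleQuot.quotQuotEquivQuotOfLE (hle n)).symm
            (Ideal.Quotient.mk I (a ^ p)) := h1
    have h2 := congrArg (DoubleQuot.quotQuotEquivQuotOfLE (hle n)) h1'
    rw [DoubleQuot.quotQuotEquivQuotOfLE_quotQuotMk, RingEquiv.apply_symm_apply] at h2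
    exact Ideal.Quotient.eq.mp h2
  -- helper to verify the first lifting condition pointwise
  have mkJ_eq : ∀ (n : ℕ) (a y : A), y - a ^ p ∈ I →
      Ideal.Quotient.mk (I.map (Ideal.Quotient.mk (I ^ (n + 1))))
          (Ideal.Quotient.mk (I ^ (n + 1)) y)
        = (DoubleQuot.quotQuotEquivQuotOfLE (hle n)).symm
            (Ideal.Quotient.mk I (a ^ p)) := by
    intro n a y hy
    have h : Ideal.Quotient.mk I y = Ideal.Quotient.mk I (a ^ p) := Ideal.Quotient.eq.mpr hy
    have := congrArg (DoubleQuot.quotQuotEquivQuotOfLE (hle n)).symm h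
    rw [DoubleQuot.quotQuotEquivQuotOfLE_symm_mk] at this
    exact this
  -- compatibility of the tower of liftings
  have K3 : ∀ (m n : ℕ) (hmn : m ≤ n),
      (Ideal.Quotient.factor (S := I ^ (n + 1)) (T := I ^ (m + 1))
        (Ideal.pow_le_pow_right (by omega))).comp (g n) = g m := by
    intro m n hmn
    apply (hg m).2
    constructor
    · ext a
      obtain ⟨y, hy⟩ := Ideal.Quotient.mk_surjective (g n a)
      simp only [RingHom.comp_apply]
      rw [← hy, Ideal.Quotient.factor_mk]
      exact mkJ_eq m a y (K4 n a y hy)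
    · rw [RingHom.comp_assoc, (hg n).1.2, ← RingHom.comp_assoc]
      refine RingHom.ext fun f => ?_
      simp only [RingHom.comp_apply, Ideal.Quotient.factor_mk]
  -- take limits
  have lim : ∀ a : A, ∃ L : A, ∀ n : ℕ,
      Ideal.Quotient.mk (I ^ (n + 1)) L = g n a := by
    intro a
    have hsur : ∀ n : ℕ, ∃ y, Ideal.Quotient.mk (I ^ (n + 1)) y = g n a :=
      fun n => Ideal.Quotient.mk_surjective _
    choose s hs using hsur
    have hcoh : ∀ {m n : ℕ}, m ≤ n → s m ≡ s n [SMOD (I ^ m • ⊤ : Submodule A A)] := by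
      intro m n hmn
      rw [SModEq.sub_mem, smul_eq_mul, Ideal.mul_top]
      have h1 : Ideal.Quotient.mk (I ^ (m + 1)) (s m)
          = Ideal.Quotient.mk (I ^ (m + 1)) (s n) := by
        have := RingHom.congr_fun (K3 m n hmn) a
        simp only [RingHom.comp_apply] at this
        rw [hs m, ← this, ← hs n, Ideal.Quotient.factor_mk]
      exact Ideal.pow_le_pow_right (Nat.le_succ m) (Ideal.Quotient.eq.mp h1)
    obtain ⟨L, hL⟩ := hprec s @hcoh
    refine ⟨L, fun n => ?_⟩
    have h1 := hL (n + 1)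
    rw [SModEq.sub_mem, smul_eq_mul, Ideal.mul_top] at h1
    have h2 : Ideal.Quotient.mk (I ^ (n + 1)) L
        = Ideal.Quotient.mk (I ^ (n + 1)) (s (n + 1)) := by
      rw [Ideal.Quotient.eq]
      simpa [neg_sub] using (I ^ (n + 1)).neg_mem h1
    have h3 := RingHom.congr_fun (K3 n (n + 1) (Nat.le_succ n)) a
    simp only [RingHom.comp_apply] at h3
    rw [h2, ← Ideal.Quotient.factor_mk (S := I ^ (n + 2)) (T := I ^ (n + 1))
      (Ideal.pow_le_pow_right (by omega)), hs (n + 1)]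
    exact h3
  choose φ hφ using lim
  -- φ is a ring hom
  have hmul : ∀ a b : A, φ (a * b) = φ a * φ b := by
    intro a b
    apply eq_of
    intro n
    rw [hφ (a * b) n, map_mul (g n), ← hφ a n, ← hφ b n, ← map_mul]
  have hadd : ∀ a b : A, φ (a + b) = φ a + φ b := by
    intro a b
    apply eq_of
    intro n
    rw [hφ (a + b) n, map_add (g n), ← hφ a n, ← hφ b n, ← map_add]
  have hone : φ 1 = 1 := by
    apply eq_of
    intro n
    rw [hφ 1 n, map_one (g n), map_one]
  have hzero : φ 0 = 0 := by
    apply eq_of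
    intro n
    rw [hφ 0 n, map_zero (g n), map_zero]
  let φA : A →+* A :=
    { toFun := φ, map_one' := hone, map_mul' := hmul, map_zero' := hzero, map_add' := hadd }
  have hφA : ∀ (a : A) (n : ℕ), Ideal.Quotient.mk (I ^ (n + 1)) (φA a) = g n a := hφ
  refine ⟨φA, ⟨?_, ?_, ?_⟩, ?_⟩
  · -- compatibility with φR
    ext r
    simp only [RingHom.comp_apply]
    apply eq_of
    intro n
    rw [hφA, ← halgC r, hg2 n, hψC]
  · -- Frobenius congruence
    intro a
    exact K4 0 a (φA a) (hφA a 0)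
  · -- rank one condition
    apply eq_of
    intro n
    rw [hφA, hx, hg2 n, hψX, ← hx]
  · -- uniqueness
    rintro φ' ⟨h1, h2, h3⟩
    have hcomp : φ'.comp (algebraMap (Polynomial R) A) = ψ := by
      apply Polynomial.ringHom_ext
      · intro r
        rw [RingHom.comp_apply, halgC r, hψC]
        exact RingHom.congr_fun h1 r
      · rw [RingHom.comp_apply, hψX, ← hx]
        exact h3
    have hlev : ∀ n : ℕ, (Ideal.Quotient.mk (I ^ (n + 1))).comp φ' = g n := by
      intro n
      apply (hg n).2
      constructor
      · ext a
        simp only [RingHom.comp_apply]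
        exact mkJ_eq n a (φ' a) (h2 a)
      · rw [RingHom.comp_assoc, hcomp]
    ext a
    apply eq_of
    intro n
    have := RingHom.congr_fun (hlev n) a
    simp only [RingHom.comp_apply] at this
    rw [this, hφA]
end

section
/- Let p be a prime number. Let R be a commutative ring equipped with a δ-structure, i.e., a ring homomorphism s_R : R → W₂(R) into the ring of p-typical truncated Witt vectors of length 2 such that (s_R r).coeff 0 = r for all r ∈ R. Let A be a commutative R-algebra with a formally étale structure map R[X] → A, let x ∈ A be the image of X, and assume A is p-adically complete. Then there exists a unique ring homomorphism s_A : A → W₂(A) such that: (i) (s_A a).coeff 0 = a for all a ∈ A; (ii) s_A ∘ (algebraMap R A) = W₂(algebraMap R A) ∘ s_R, where W₂(algebraMap R A) is the induced map on truncated Witt vectors; and (iii) (s_A x).coeff 1 = 0 (i.e., δ(x) = 0, x has rank one). -/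
open Polynomial

universe u

namespace WittDeltaAux

open WittVector TruncatedWittVector

variable (p : ℕ) [hp : Fact p.Prime]

section Maps

variable {B : Type u} [CommRing B] {C : Type u} [CommRing C] {D : Type u} [CommRing D]

lemma rinv : Function.RightInverse (TruncatedWittVector.out (p := p) (n := 2) (R := B))
    (WittVector.truncate (p := p) 2) :=
  fun w => TruncatedWittVector.truncateFun_out w

/-- The first-coordinate projection `W₂(B) → B` as a ring homomorphism. -/
noncomputable def pr : TruncatedWittVector p 2 B →+* B :=
  (WittVector.truncate 2).liftOfRightInverse _ (rinv p)
    ⟨WittVector.constantCoeff, by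
      intro v hv
      rw [WittVector.mem_ker_truncate] at hv
      simpa using hv 0 (by norm_num)⟩

@[simp] lemma pr_apply (w : TruncatedWittVector p 2 B) : pr p w = w.coeff 0 := by
  obtain ⟨v, rfl⟩ := WittVector.truncate_surjective p 2 B w
  have := RingHom.liftOfRightInverse_comp_apply (WittVector.truncate (p := p) (R := B) 2) _
    (rinv p) ⟨WittVector.constantCoeff, by
      intro v hv
      rw [WittVector.mem_ker_truncate] at hv
      simpa using hv 0 (by norm_num)⟩ v
  rw [pr, this]
  simp

/-- Functoriality of length-2 truncated Witt vectors. -/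
noncomputable def mapT (f : B →+* C) :
    TruncatedWittVector p 2 B →+* TruncatedWittVector p 2 C :=
  (WittVector.truncate 2).liftOfRightInverse _ (rinv p)
    ⟨(WittVector.truncate 2).comp (WittVector.map f), by
      intro v hv
      rw [WittVector.mem_ker_truncate] at hv
      rw [RingHom.mem_ker, RingHom.comp_apply, ← RingHom.mem_ker, WittVector.mem_ker_truncate]
      intro i hi
      rw [WittVector.map_coeff, hv i hi, map_zero]⟩

lemma mapT_truncate (f : B →+* C) (v : WittVector p B) :
    mapT p f (WittVector.truncate 2 v) = WittVector.truncate 2 (WittVector.map f v) :=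
  RingHom.liftOfRightInverse_comp_apply _ _ (rinv p) _ v

@[simp] lemma mapT_coeff (f : B →+* C) (w : TruncatedWittVector p 2 B) (i : Fin 2) :
    (mapT p f w).coeff i = f (w.coeff i) := by
  obtain ⟨v, rfl⟩ := WittVector.truncate_surjective p 2 B w
  rw [mapT_truncate]
  simp

lemma mapT_mapT (f : B →+* C) (g : C →+* D) (w : TruncatedWittVector p 2 B) :
    mapT p g (mapT p f w) = mapT p (g.comp f) w := by
  apply TruncatedWittVector.ext
  intro i
  simp

end Maps

end WittDeltaAux

namespace WittDeltaAux2
open WittVector TruncatedWittVector WittDeltaAux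

variable (p : ℕ) [hp : Fact p.Prime]
variable {B : Type u} [CommRing B]

/-- A Witt vector with prescribed zeroth coefficient. -/
noncomputable def cvec (b : B) : WittVector p B :=
  WittVector.mk p (fun i => if i = 0 then b else 0)

@[simp] lemma cvec_coeff_zero (b : B) : (cvec p b).coeff 0 = b := rfl

/-- The additive section `b ↦ (0, b)` of `W₂(B)`. -/
noncomputable def vT (b : B) : TruncatedWittVector p 2 B :=
  WittVector.truncate 2 (WittVector.verschiebung (cvec p b))

@[simp] lemma vT_coeff_zero (b : B) : (vT p b).coeff 0 = 0 := by
  simp [vT, WittVector.verschiebung_coeff_zero]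

@[simp] lemma vT_coeff_one (b : B) : (vT p b).coeff 1 = b := by
  have : ((1 : Fin 2) : ℕ) = Nat.succ 0 := rfl
  simp [vT, this, WittVector.verschiebung_coeff_succ]

lemma truncate_verschiebung (z : WittVector p B) :
    WittVector.truncate 2 (WittVector.verschiebung z) = vT p (z.coeff 0) := by
  apply TruncatedWittVector.ext
  intro i
  fin_cases i
  · simp [WittVector.verschiebung_coeff_zero]
  · have : ((1 : Fin 2) : ℕ) = Nat.succ 0 := rfl
    rw [WittVector.coeff_truncate]
    show (WittVector.verschiebung z).coeff (Nat.succ 0) = _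
    rw [WittVector.verschiebung_coeff_succ]
    exact (vT_coeff_one p _).symm

lemma eq_vT {w : TruncatedWittVector p 2 B} (h : w.coeff 0 = 0) : w = vT p (w.coeff 1) := by
  apply TruncatedWittVector.ext
  intro i
  fin_cases i
  · simpa using h
  · simp

@[simp] lemma vT_zero : vT p (0 : B) = 0 := by
  apply TruncatedWittVector.ext
  intro i
  fin_cases i <;> simp

lemma vT_add (a b : B) : vT p a + vT p b = vT p (a + b) := by
  rw [vT, vT, ← map_add, ← map_add WittVector.verschiebung, truncate_verschiebung,
    WittVector.add_coeff_zero]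
  simp

lemma mul_vT (x : TruncatedWittVector p 2 B) (b : B) :
    ∃ c : B, x * vT p b = vT p (c * b) := by
  obtain ⟨u, rfl⟩ := WittVector.truncate_surjective p 2 B x
  refine ⟨(WittVector.frobenius u).coeff 0, ?_⟩
  rw [vT, ← map_mul, mul_comm, ← WittVector.verschiebung_mul_frobenius,
    truncate_verschiebung, WittVector.mul_coeff_zero]
  simp [mul_comm]

lemma vT_mul_vT (a b : B) : vT p a * vT p b = vT p (p * (a * b)) := by
  rw [vT, vT, ← map_mul, ← WittVector.verschiebung_mul_frobenius,
    WittVector.frobenius_verschiebung, truncate_verschiebung]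
  congr 1
  rw [WittVector.mul_coeff_zero, WittVector.mul_coeff_zero]
  have : ((p : WittVector p B)).coeff 0 = (p : B) := by
    exact map_natCast (WittVector.constantCoeff (p := p) (R := B)) p
  rw [cvec_coeff_zero, cvec_coeff_zero, this]
  ring

lemma ker_pr_pow (n : ℕ) :
    ∀ w ∈ (RingHom.ker (pr p (B := B))) ^ (n + 1),
      w.coeff 0 = 0 ∧ w.coeff 1 ∈ (Ideal.span {(p : B)}) ^ n := by
  induction n with
  | zero =>
    intro w hw
    rw [pow_one, RingHom.mem_ker, pr_apply] at hw
    exact ⟨hw, by simp⟩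
  | succ n ih =>
    intro w hw
    rw [pow_succ] at hw
    refine Submodule.mul_induction_on hw ?_ ?_
    · intro a ha b hb
      obtain ⟨ha0, ha1⟩ := ih a ha
      have hb0 : b.coeff 0 = 0 := by rwa [RingHom.mem_ker, pr_apply] at hb
      rw [eq_vT p ha0, eq_vT p hb0, vT_mul_vT]
      refine ⟨by simp, ?_⟩
      rw [vT_coeff_one, pow_succ]
      have : (p : B) * (a.coeff 1 * b.coeff 1) = a.coeff 1 * ((p : B) * b.coeff 1) := by ring
      rw [this]
      exact Ideal.mul_mem_mul ha1 (Ideal.mul_mem_right _ _ (Ideal.mem_span_singleton_self _))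
    · intro y z hy hz
      obtain ⟨hy0, hy1⟩ := hy
      obtain ⟨hz0, hz1⟩ := hz
      rw [eq_vT p hy0, eq_vT p hz0, vT_add]
      exact ⟨by simp, by rw [vT_coeff_one]; exact Ideal.add_mem _ hy1 hz1⟩

lemma ker_pr_nilpotent {n : ℕ} (h : (p : B) ^ n = 0) :
    IsNilpotent (RingHom.ker (pr p (B := B))) := by
  refine ⟨n + 1, ?_⟩
  rw [Ideal.zero_eq_bot, eq_bot_iff]
  intro w hw
  obtain ⟨h0, h1⟩ := ker_pr_pow p n w hw
  rw [Ideal.span_singleton_pow, h, Ideal.span_singleton_eq_bot.mpr rfl, Ideal.mem_bot] at h1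
  rw [Ideal.mem_bot, eq_vT p h0, h1, vT_zero]

end WittDeltaAux2


open WittDeltaAux WittDeltaAux2

/-- A `δ`-structure on `R` (a ring-homomorphism section of `W₂(R) → R`) extends uniquely to
a `p`-adically complete `R`-algebra `A` with a topologically étale coordinate `x`, in such a
way that `x` has rank one (`δ(x) = 0`).  The compatibility `sA ∘ algebraMap = W₂(algebraMap) ∘ sR`
is expressed coefficientwise, since the induced map on length-two Witt vectors acts
coefficientwise. -/
theorem exists_unique_delta_structure
    (p : ℕ) [hp : Fact p.Prime]
    (R A : Type u) [CommRing R]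
    (sR : R →+* TruncatedWittVector p 2 R)
    (hsR : ∀ r : R, (sR r).coeff 0 = r)
    [CommRing A] [Algebra R A]
    [Algebra (Polynomial R) A] [IsScalarTower R (Polynomial R) A]
    [Algebra.FormallyEtale (Polynomial R) A]
    (x : A) (hx : x = algebraMap (Polynomial R) A Polynomial.X)
    [IsAdicComplete (Ideal.span {(p : A)}) A] :
    ∃! sA : A →+* TruncatedWittVector p 2 A,
      (∀ a : A, (sA a).coeff 0 = a) ∧
      (∀ (r : R) (i : Fin 2),
        (sA (algebraMap R A r)).coeff i = algebraMap R A ((sR r).coeff i)) ∧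
      (sA x).coeff 1 = 0 := by
  classical
  set J : Ideal A := Ideal.span {(p : A)} with hJdef
  let π : (n : ℕ) → A →+* A ⧸ (J ^ n) := fun n => Ideal.Quotient.mk (J ^ n)
  have smtop : ∀ n : ℕ, (J ^ n • ⊤ : Submodule A A) = J ^ n := fun n => by
    rw [Ideal.smul_eq_mul, Ideal.mul_top]
  -- separation of scalars
  have hsep : ∀ y z : A, (∀ n, π n y = π n z) → y = z := by
    intro y z h
    have hh : IsHausdorff J A := IsAdicComplete.toIsHausdorff
    have h0 : y - z = 0 := by
      refine hh.haus (y - z) fun n => ?_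
      rw [SModEq.zero, smtop n]
      exact Ideal.Quotient.eq.mp (h n)
    exact sub_eq_zero.mp h0
  -- the coordinate Witt vector and the structural map φ : R[X] → W₂(A)
  let xw : TruncatedWittVector p 2 A := TruncatedWittVector.mk p ![x, 0]
  have xw0 : xw.coeff 0 = x := by simp [xw]
  have xw1 : xw.coeff 1 = 0 := by simp [xw]
  let φ : Polynomial R →+* TruncatedWittVector p 2 A :=
    eval₂RingHom ((mapT p (algebraMap R A)).comp sR) xw
  have φC : ∀ r : R, φ (C r) = mapT p (algebraMap R A) (sR r) := fun r => by
    simp [φ, coe_eval₂RingHom, eval₂_C]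
  have φX : φ X = xw := by simp [φ, coe_eval₂RingHom, eval₂_X]
  have algC : ∀ r : R, algebraMap (Polynomial R) A (C r) = algebraMap R A r := fun r => by
    rw [IsScalarTower.algebraMap_apply R (Polynomial R) A r, Polynomial.algebraMap_eq]
  have hφ : (pr p).comp φ = algebraMap (Polynomial R) A := by
    apply Polynomial.ringHom_ext
    · intro r
      rw [RingHom.comp_apply, φC, pr_apply, mapT_coeff, hsR, algC]
    · rw [RingHom.comp_apply, φX, pr_apply, xw0, hx]
  -- lifting to length-two Witt vectors of A/p^n, with uniqueness
  have key : ∀ n : ℕ, ∃ F : A →+* TruncatedWittVector p 2 (A ⧸ (J ^ n)),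
      (∀ a : A, (F a).coeff 0 = π n a) ∧
      (F.comp (algebraMap (Polynomial R) A) = (mapT p (π n)).comp φ) ∧
      (∀ G : A →+* TruncatedWittVector p 2 (A ⧸ (J ^ n)),
        (∀ a : A, (G a).coeff 0 = π n a) →
        (G.comp (algebraMap (Polynomial R) A) = (mapT p (π n)).comp φ) → G = F) := by
    intro n
    letI : Algebra (Polynomial R) (TruncatedWittVector p 2 (A ⧸ (J ^ n))) :=
      ((mapT p (π n)).comp φ).toAlgebra
    have halg : algebraMap (Polynomial R) (TruncatedWittVector p 2 (A ⧸ (J ^ n)))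
        = (mapT p (π n)).comp φ := rfl
    have hpn : (p : A ⧸ (J ^ n)) ^ n = 0 := by
      have hmem : ((p : A)) ^ n ∈ J ^ n :=
        Ideal.pow_mem_pow (by rw [hJdef]; exact Ideal.mem_span_singleton_self _) n
      calc (p : A ⧸ (J ^ n)) ^ n = π n ((p : A) ^ n) := by rw [map_pow, map_natCast]
        _ = 0 := Ideal.Quotient.eq_zero_iff_mem.mpr hmem
    have hnil : IsNilpotent (RingHom.ker (pr p (B := A ⧸ (J ^ n)))) := ker_pr_nilpotent p hpn
    let g : TruncatedWittVector p 2 (A ⧸ (J ^ n)) →ₐ[Polynomial R] A ⧸ (J ^ n) :=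
      { toRingHom := pr p
        commutes' := fun q => by
          have h1 : algebraMap (Polynomial R) (A ⧸ (J ^ n)) q
              = π n (algebraMap (Polynomial R) A q) :=
            ((Ideal.Quotient.mkₐ (Polynomial R) (J ^ n)).commutes q).symm
          show pr p (((mapT p (π n)).comp φ) q) = _
          rw [RingHom.comp_apply, pr_apply, mapT_coeff, ← pr_apply p (φ q),
            ← RingHom.comp_apply (pr p) φ q, hφ, h1] }
    have hgs : Function.Surjective g := fun c =>
      ⟨TruncatedWittVector.mk p ![c, 0], by
        show pr p _ = c
        simp⟩
    let f : A →ₐ[Polynomial R] A ⧸ (J ^ n) := Ideal.Quotient.mkₐ (Polynomial R) (J ^ n)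
    let Fl := Algebra.FormallySmooth.liftOfSurjective f g hgs hnil
    refine ⟨Fl.toRingHom, fun a => ?_, ?_, ?_⟩
    · have h2 := Algebra.FormallySmooth.liftOfSurjective_apply f g hgs hnil a
      have h3 : pr p (Fl a) = π n a := h2
      rwa [pr_apply] at h3
    · apply RingHom.ext
      intro q
      have := Fl.commutes q
      rw [halg] at this
      exact this
    · intro G hG0 hGc
      let Gl : A →ₐ[Polynomial R] TruncatedWittVector p 2 (A ⧸ (J ^ n)) :=
        { toRingHom := G
          commutes' := fun q => by
            rw [halg]
            exact RingHom.congr_fun hGc q }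
      have hGF : Gl = Fl := by
        refine Algebra.FormallyUnramified.ext' (pr p) hnil Gl Fl fun a => ?_
        show pr p (G a) = pr p (Fl a)
        rw [pr_apply, pr_apply, hG0 a]
        have h2 := Algebra.FormallySmooth.liftOfSurjective_apply f g hgs hnil a
        exact (h2 : pr p (Fl a) = π n a).symm
      exact congrArg AlgHom.toRingHom hGF
  choose F hF0 hFc hFuniq using key
  -- compatibility of the tower
  have compat : ∀ {m n : ℕ} (h : m ≤ n),
      (mapT p (Ideal.Quotient.factor (S := J ^ n) (T := J ^ m) (Ideal.pow_le_pow_right h))).comp (F n)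
        = F m := by
    intro m n h
    apply hFuniq m
    · intro a
      rw [RingHom.comp_apply, mapT_coeff, hF0 n a]
      exact Ideal.Quotient.factor_mk _ _
    · rw [RingHom.comp_assoc, hFc n]
      apply RingHom.ext
      intro q
      rw [RingHom.comp_apply, RingHom.comp_apply, RingHom.comp_apply, mapT_mapT,
        Ideal.Quotient.factor_comp_mk]
  -- construction of δ by completeness
  have exδ : ∀ a : A, ∃ d : A, ∀ n, π n d = (F n a).coeff 1 := by
    intro a
    have lifts : ∀ n : ℕ, ∃ dn : A, π n dn = (F n a).coeff 1 := fun n =>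
      Ideal.Quotient.mk_surjective _
    choose dd hdd using lifts
    have hcomp : ∀ {m n : ℕ}, m ≤ n → dd m ≡ dd n [SMOD (J ^ m • ⊤ : Submodule A A)] := by
      intro m n h
      rw [SModEq.sub_mem, smtop m]
      have h1 : π m (dd n) = (F m a).coeff 1 := by
        have e1 : π m (dd n)
            = Ideal.Quotient.factor (S := J ^ n) (T := J ^ m) (Ideal.pow_le_pow_right h) (π n (dd n)) :=
          (Ideal.Quotient.factor_mk _ _).symm
        have e2 : mapT p (Ideal.Quotient.factor (S := J ^ n) (T := J ^ m)
            (Ideal.pow_le_pow_right h)) (F n a) = F m a := RingHom.congr_fun (compat h) a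
        rw [e1, hdd n, ← mapT_coeff p _ (F n a) 1, e2]
      exact Ideal.Quotient.eq.mp (by rw [hdd m, h1])
    have hpre : IsPrecomplete J A := IsAdicComplete.toIsPrecomplete
    obtain ⟨L, hL⟩ := hpre.prec fun {m n} h => hcomp h
    refine ⟨L, fun n => ?_⟩
    have h2 := hL n
    rw [SModEq.sub_mem, smtop n] at h2
    have h3 : π n (dd n) = π n L := Ideal.Quotient.eq.mpr h2
    rw [← h3, hdd n]
  choose δ hδ using exδ
  -- the candidate section
  let sfun : A → TruncatedWittVector p 2 A := fun a => TruncatedWittVector.mk p ![a, δ a]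
  have s0 : ∀ a, (sfun a).coeff 0 = a := fun a => by simp [sfun]
  have s1 : ∀ a, (sfun a).coeff 1 = δ a := fun a => by simp [sfun]
  have master : ∀ (a : A) (n : ℕ), mapT p (π n) (sfun a) = F n a := by
    intro a n
    apply TruncatedWittVector.ext
    intro i
    fin_cases i
    · show (mapT p (π n) (sfun a)).coeff 0 = (F n a).coeff 0
      rw [mapT_coeff, s0, hF0 n a]
    · show (mapT p (π n) (sfun a)).coeff 1 = (F n a).coeff 1
      rw [mapT_coeff, s1, hδ]
  have hsepW : ∀ w w' : TruncatedWittVector p 2 A,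
      (∀ n, mapT p (π n) w = mapT p (π n) w') → w = w' := by
    intro w w' h
    apply TruncatedWittVector.ext
    intro i
    apply hsep
    intro n
    have h2 := congrArg (TruncatedWittVector.coeff i) (h n)
    simpa [mapT_coeff] using h2
  let sA : A →+* TruncatedWittVector p 2 A :=
    { toFun := sfun
      map_one' := hsepW _ _ fun n => by rw [master, map_one, map_one]
      map_mul' := fun a b => hsepW _ _ fun n => by
        rw [master, map_mul, map_mul, master, master]
      map_zero' := hsepW _ _ fun n => by rw [master, map_zero, map_zero]
      map_add' := fun a b => hsepW _ _ fun n => by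
        rw [master, map_add, map_add, master, master] }
  have sA_apply : ∀ a, sA a = sfun a := fun a => rfl
  refine ⟨sA, ⟨fun a => s0 a, ?_, ?_⟩, ?_⟩
  · intro r i
    apply hsep
    intro n
    have h1 : mapT p (π n) (sA (algebraMap R A r)) = F n (algebraMap R A r) := master _ n
    have h2 : F n (algebraMap R A r) = mapT p (π n) (φ (C r)) := by
      have h3 := RingHom.congr_fun (hFc n) (C r)
      rwa [RingHom.comp_apply, RingHom.comp_apply, algC] at h3
    have h4 := congrArg (TruncatedWittVector.coeff i) (h1.trans h2)
    simpa [mapT_coeff, φC] using h4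
  · show (sA x).coeff 1 = 0
    apply hsep
    intro n
    have h1 : mapT p (π n) (sA x) = F n x := master x n
    have h2 : F n x = mapT p (π n) xw := by
      have h3 := RingHom.congr_fun (hFc n) (X : Polynomial R)
      rw [RingHom.comp_apply, RingHom.comp_apply, φX, ← hx] at h3
      exact h3
    have h4 := congrArg (TruncatedWittVector.coeff (1 : Fin 2)) (h1.trans h2)
    simp only [mapT_coeff] at h4
    rw [h4, xw1]
  · intro s' hs'
    obtain ⟨h0, h1, h2⟩ := hs'
    have hkey : s'.comp (algebraMap (Polynomial R) A) = φ := by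
      apply Polynomial.ringHom_ext
      · intro r
        rw [RingHom.comp_apply, algC, φC]
        apply TruncatedWittVector.ext
        intro i
        rw [h1 r i, mapT_coeff]
      · rw [RingHom.comp_apply, ← hx, φX]
        apply TruncatedWittVector.ext
        intro i
        fin_cases i
        · show (s' x).coeff 0 = xw.coeff 0
          rw [h0, xw0]
        · show (s' x).coeff 1 = xw.coeff 1
          rw [h2, xw1]
    apply RingHom.ext
    intro a
    apply hsepW
    intro n
    rw [sA_apply, master]
    refine RingHom.congr_fun (hFuniq n ((mapT p (π n)).comp s')
      (fun a => by rw [RingHom.comp_apply, mapT_coeff, h0]) ?_) a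
    rw [RingHom.comp_assoc, hkey]
end

section
/- Let R be a commutative ring, q ∈ R, p a prime number, and m ≥ 1 a natural number. On the polynomial ring R[X] consider: the R-algebra endomorphism F determined by F(X) = X^p; for c ∈ R the R-algebra endomorphism σ_c determined by σ_c(X) = c·X; and for c ∈ R the unique R-linear endomorphism D_c of R[X] with D_c(X^n) = (n)_c·X^{n−1} for all n ≥ 1 and D_c(1) = 0 (the c-twisted derivative). Then: (1) F ∘ σ_{q^{p^m}} = σ_{q^{p^{m−1}}} ∘ F; and (2) for all f ∈ R[X], (p)_{q^{p^{m−1}}}·X^{p−1}·F(D_{q^{p^m}}(f)) = D_{q^{p^{m−1}}}(F(f)). -/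
open Polynomial Finset

lemma geom_aux {R : Type*} [CommRing R] (x : R) (p n : ℕ) :
    (∑ i ∈ Finset.range p, x ^ i) * (∑ j ∈ Finset.range n, (x ^ p) ^ j)
      = ∑ i ∈ Finset.range (p * n), x ^ i := by
  induction n with
  | zero => simp
  | succ n ih =>
    rw [Finset.sum_range_succ, mul_add, ih, Nat.mul_succ, Finset.sum_range_add]
    congr 1
    rw [Finset.sum_mul]
    exact Finset.sum_congr rfl fun i _ => by rw [pow_add, pow_mul, mul_comm]

/-- Commutation rules between the Frobenius `F : X ↦ X^p`, the twists `σ_c : X ↦ c·X`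
and the twisted derivatives `D_c : X^n ↦ (n)_c·X^{n-1}` on the polynomial ring `R[X]`:
`F ∘ σ_{q^{p^m}} = σ_{q^{p^{m-1}}} ∘ F` and
`(p)_{q^{p^{m-1}}}·X^{p-1}·F(D_{q^{p^m}} f) = D_{q^{p^{m-1}}}(F f)`. -/
theorem frobenius_twisted_derivative_commutation
    (R : Type*) [CommRing R] (q : R) (p m : ℕ) (hp : p.Prime) (hm : 1 ≤ m)
    (D D' : Polynomial R →ₗ[R] Polynomial R)
    (hD : ∀ n : ℕ, 1 ≤ n →
      D (X ^ n) = C (∑ i ∈ Finset.range n, (q ^ p ^ m) ^ i) * X ^ (n - 1))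
    (hD1 : D 1 = 0)
    (hD' : ∀ n : ℕ, 1 ≤ n →
      D' (X ^ n) = C (∑ i ∈ Finset.range n, (q ^ p ^ (m - 1)) ^ i) * X ^ (n - 1))
    (hD'1 : D' 1 = 0) :
    (∀ f : Polynomial R,
      Polynomial.aeval (X ^ p : Polynomial R)
          (Polynomial.aeval (C (q ^ p ^ m) * X : Polynomial R) f)
        = Polynomial.aeval (C (q ^ p ^ (m - 1)) * X : Polynomial R)
            (Polynomial.aeval (X ^ p : Polynomial R) f)) ∧
    (∀ f : Polynomial R,
      C (∑ i ∈ Finset.range p, (q ^ p ^ (m - 1)) ^ i) * X ^ (p - 1) *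
          Polynomial.aeval (X ^ p : Polynomial R) (D f)
        = D' (Polynomial.aeval (X ^ p : Polynomial R) f)) := by
  obtain ⟨m', rfl⟩ : ∃ m', m = m' + 1 := ⟨m - 1, by omega⟩
  simp only [Nat.add_sub_cancel] at hD' ⊢
  have hc : q ^ p ^ (m' + 1) = (q ^ p ^ m') ^ p := by
    rw [pow_succ, pow_mul]
  set c' : R := q ^ p ^ m' with hc'
  constructor
  · intro f
    have h : ((aeval (X ^ p : Polynomial R)).comp
          (aeval (C (q ^ p ^ (m' + 1)) * X : Polynomial R)) : Polynomial R →ₐ[R] Polynomial R)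
        = (aeval (C c' * X : Polynomial R)).comp (aeval (X ^ p : Polynomial R)) := by
      apply Polynomial.algHom_ext
      simp only [AlgHom.coe_comp, Function.comp_apply, map_mul, map_pow, aeval_X, aeval_C,
        Polynomial.algebraMap_eq, hc, mul_pow, C_pow]
    exact DFunLike.congr_fun h f
  · intro f
    induction f using Polynomial.induction_on' with
    | add f g hf hg => simp only [map_add, mul_add, hf, hg]
    | monomial n a =>
      rcases Nat.eq_zero_or_pos n with rfl | hn
      · have h1 : (monomial 0 a : Polynomial R) = a • 1 := by
          simp [Polynomial.smul_eq_C_mul]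
        simp [h1, map_smul, hD1, hD'1]
      · have h1 : (monomial n a : Polynomial R) = a • X ^ n := by
          rw [Polynomial.smul_eq_C_mul, C_mul_X_pow_eq_monomial]
        obtain ⟨n', rfl⟩ : ∃ n', n = n' + 1 := ⟨n - 1, by omega⟩
        have hpn : 1 ≤ p * (n' + 1) := Nat.mul_pos hp.pos n'.succ_pos
        have hexp : p - 1 + p * n' = p * (n' + 1) - 1 := by
          have := hp.one_lt
          rw [Nat.mul_succ]; omega
        have hcoef : (∑ i ∈ Finset.range p, c' ^ i) *
            (∑ i ∈ Finset.range (n' + 1), (q ^ p ^ (m' + 1)) ^ i)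
            = ∑ i ∈ Finset.range (p * (n' + 1)), c' ^ i := by
          rw [hc]; exact geom_aux c' p (n' + 1)
        rw [h1, map_smul, map_smul, hD _ hn, Nat.add_sub_cancel]
        simp only [map_smul, map_mul, map_pow, aeval_X, aeval_C,
          Polynomial.algebraMap_eq, ← pow_mul]
        rw [hD' _ hpn, ← hcoef, ← hexp, pow_add, map_mul]
        rw [smul_eq_C_mul, smul_eq_C_mul]
        simp only [pow_mul]
        ring
end

section
/- Let R be a commutative ring, p a prime number, and λ, λ' ∈ R. Let A' and A be commutative R-algebras, F : A' → A an R-algebra homomorphism (making A an A'-algebra), σ' an R-algebra endomorphism of A', σ an R-algebra endomorphism of A, D' : A' → A' an R-linear map with D'(fg) = D'(f)·g + σ'(f)·D'(g) for all f, g ∈ A', D : A → A an R-linear map with D(fg) = D(f)·g + σ(f)·D(g) for all f, g ∈ A, and x ∈ A. Assume: (i) σ ∘ F = F ∘ σ'; and (ii) λ·D(F(f)) = λ'·x^{p−1}·F(D'(f)) for all f ∈ A'. Let M' be an A'-module and θ' : M' → M' an R-linear map satisfying θ'(f·s) = λ'·(D'(f)·s) + σ'(f)·θ'(s) for all f ∈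 A', s ∈ M'. Then on M := A ⊗_{A'} M' there exists a unique R-linear map θ : M → M such that θ(f ⊗ s) = λ·(D(f) ⊗ s) + (x^{p−1}·σ(f)) ⊗ θ'(s) for all f ∈ A, s ∈ M'; in particular θ(1 ⊗ s) = x^{p−1} ⊗ θ'(s), and θ satisfies the twisted Leibniz rule θ(f·t) = λ·(D(f)·t) + σ(f)·θ(t) for all f ∈ A, t ∈ M. -/
open TensorProduct

/-- Level raising for twisted derivations: a twisted derivation `θ'` of level `-m` on an
`A'`-module `M'` induces a unique twisted derivation `θ` of level `-m+1` on the Frobenius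
pullback `M = A ⊗_{A'} M'`, with `θ(f ⊗ s) = λ·(D f ⊗ s) + (x^{p-1}·σ f) ⊗ θ' s`; in
particular `θ(1 ⊗ s) = x^{p-1} ⊗ θ' s` and `θ` satisfies the twisted Leibniz rule. -/
theorem level_raising_twisted_derivation
    (R A' A : Type*) [CommRing R] [CommRing A'] [CommRing A]
    [Algebra R A'] [Algebra R A] [Algebra A' A] [IsScalarTower R A' A]
    (p : ℕ) (hp : p.Prime) (l l' : R)
    (σ' : A' →ₐ[R] A') (σ : A →ₐ[R] A)
    (D' : A' →ₗ[R] A') (hD' : ∀ f g : A', D' (f * g) = D' f * g + σ' f * D' g)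
    (D : A →ₗ[R] A) (hD : ∀ f g : A, D (f * g) = D f * g + σ f * D g)
    (x : A)
    (hcomm1 : ∀ f : A', σ (algebraMap A' A f) = algebraMap A' A (σ' f))
    (hcomm2 : ∀ f : A',
      l • D (algebraMap A' A f) = l' • (x ^ (p - 1) * algebraMap A' A (D' f)))
    (M' : Type*) [AddCommGroup M'] [Module A' M'] [Module R M'] [IsScalarTower R A' M']
    (θ' : M' →ₗ[R] M')
    (hθ' : ∀ (f : A') (s : M'), θ' (f • s) = l' • (D' f • s) + σ' f • θ' s) :
    ∃! θ : (A ⊗[A'] M') →ₗ[R] (A ⊗[A'] M'),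
      (∀ (f : A) (s : M'),
        θ (f ⊗ₜ[A'] s) = l • ((D f) ⊗ₜ[A'] s) + (x ^ (p - 1) * σ f) ⊗ₜ[A'] θ' s) ∧
      (∀ s : M', θ ((1 : A) ⊗ₜ[A'] s) = (x ^ (p - 1)) ⊗ₜ[A'] θ' s) ∧
      (∀ (f : A) (t : A ⊗[A'] M'), θ (f • t) = l • (D f • t) + σ f • θ t) := by
  classical
  have hD1 : D (1 : A) = 0 := by
    have h := hD 1 1
    simp only [mul_one, one_mul, map_one] at h
    exact (add_eq_left.mp h.symm)
  -- moving an `A'`-element across the tensor sign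
  have hmove : ∀ (a : A) (c : A') (s : M'),
      (a * algebraMap A' A c) ⊗ₜ[A'] s = a ⊗ₜ[A'] (c • s) := by
    intro a c s
    rw [mul_comm, ← Algebra.smul_def, smul_tmul]
  -- `R`-scalars act on the left tensor factor
  have hsmul : ∀ (r : R) (a : A) (s : M'),
      r • (a ⊗ₜ[A'] s) = (r • a) ⊗ₜ[A'] s := by
    intro r a s
    rw [smul_tmul']
  -- `R`-scalars can also be put on the right tensor factor
  have hsmul2 : ∀ (r : R) (a : A) (s : M'),
      a ⊗ₜ[A'] (r • s) = r • (a ⊗ₜ[A'] s) := by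
    intro r a s
    rw [← algebraMap_smul A' r s, ← smul_tmul, algebraMap_smul, hsmul]
  -- the candidate value on pure tensors
  set φfun : A → M' → A ⊗[A'] M' := fun f s =>
    l • (D f ⊗ₜ[A'] s) + (x ^ (p - 1) * σ f) ⊗ₜ[A'] θ' s with hφfun
  -- `A'`-balancedness of the candidate
  have key : ∀ (g : A') (f : A) (s : M'), φfun (g • f) s = φfun f (g • s) := by
    intro g f s
    simp only [hφfun]
    rw [Algebra.smul_def, mul_comm (algebraMap A' A g) f, hD, hθ']
    have e1 : l • ((D f * algebraMap A' A g) ⊗ₜ[A'] s) = l • (D f ⊗ₜ[A'] (g • s)) := by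
      rw [hmove]
    have e2 : l • ((σ f * D (algebraMap A' A g)) ⊗ₜ[A'] s)
        = (x ^ (p - 1) * σ f) ⊗ₜ[A'] (l' • (D' g • s)) := by
      rw [hsmul, ← mul_smul_comm, hcomm2, mul_smul_comm, ← hsmul,
        mul_left_comm, ← mul_assoc, hmove, ← hsmul2]
    have e3 : (x ^ (p - 1) * σ (f * algebraMap A' A g)) ⊗ₜ[A'] θ' s
        = (x ^ (p - 1) * σ f) ⊗ₜ[A'] (σ' g • θ' s) := by
      rw [map_mul, hcomm1, ← mul_assoc, hmove]
    rw [add_tmul, smul_add, e1, e2, e3, tmul_add]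
    abel
  -- build the additive lift
  let φ₁ : A → M' →+ (A ⊗[A'] M') := fun f =>
    AddMonoidHom.mk' (fun s => φfun f s) (by
      intro s t
      simp only [hφfun, map_add, tmul_add, smul_add]
      abel)
  let φ : A →+ (M' →+ (A ⊗[A'] M')) :=
    AddMonoidHom.mk' φ₁ (by
      intro f g
      ext s
      simp only [φ₁, AddMonoidHom.mk'_apply, AddMonoidHom.add_apply, hφfun,
        map_add, mul_add, add_tmul, smul_add]
      abel)
  let θ₀ : (A ⊗[A'] M') →+ (A ⊗[A'] M') := TensorProduct.liftAddHom φ (by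
    intro g f s
    exact key g f s)
  have hθ₀ : ∀ (f : A) (s : M'), θ₀ (f ⊗ₜ[A'] s) = φfun f s := by
    intro f s
    exact TensorProduct.liftAddHom_tmul φ _ f s
  -- upgrade to an `R`-linear map
  let θ : (A ⊗[A'] M') →ₗ[R] (A ⊗[A'] M') :=
    { toFun := θ₀
      map_add' := θ₀.map_add
      map_smul' := by
        intro r t
        simp only [RingHom.id_apply]
        induction t using TensorProduct.induction_on with
        | zero => simp
        | tmul f s =>
            rw [hsmul, hθ₀, hθ₀]
            simp only [hφfun, map_smul]
            rw [mul_smul_comm, ← hsmul, ← hsmul, smul_comm l r, ← smul_add]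
        | add t₁ t₂ h₁ h₂ =>
            rw [smul_add, map_add, h₁, h₂, map_add, smul_add] }
  have hθtmul : ∀ (f : A) (s : M'),
      θ (f ⊗ₜ[A'] s) = l • (D f ⊗ₜ[A'] s) + (x ^ (p - 1) * σ f) ⊗ₜ[A'] θ' s := by
    intro f s
    exact hθ₀ f s
  refine ⟨θ, ⟨hθtmul, ?_, ?_⟩, ?_⟩
  · intro s
    rw [hθtmul, hD1, zero_tmul, smul_zero, zero_add, map_one, mul_one]
  · intro f t
    induction t using TensorProduct.induction_on with
    | zero => simp
    | tmul g s =>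
        have hfg : f • (g ⊗ₜ[A'] s) = (f * g) ⊗ₜ[A'] s := by
          rw [smul_tmul']; rfl
        rw [hfg, hθtmul, hD, hθtmul, map_mul]
        have hDfy : D f • (g ⊗ₜ[A'] s) = (D f * g) ⊗ₜ[A'] s := by
          rw [smul_tmul']; rfl
        have hσ1 : σ f • (l • (D g ⊗ₜ[A'] s)) = l • ((σ f * D g) ⊗ₜ[A'] s) := by
          rw [smul_comm, smul_tmul', smul_eq_mul]
        have hσ2 : σ f • ((x ^ (p - 1) * σ g) ⊗ₜ[A'] θ' s)
            = (x ^ (p - 1) * (σ f * σ g)) ⊗ₜ[A'] θ' s := by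
          rw [smul_tmul', smul_eq_mul, mul_left_comm]
        rw [smul_add, hσ1, hσ2, hDfy, add_tmul, smul_add]
        abel
    | add t₁ t₂ h₁ h₂ =>
        rw [smul_add, map_add, h₁, h₂, map_add, smul_add, smul_add, smul_add]
        abel
  · intro θ₁ hθ₁
    ext t
    induction t using TensorProduct.induction_on with
    | zero => simp
    | tmul f s => rw [hθ₁.1 f s, hθtmul]
    | add t₁ t₂ h₁ h₂ => rw [map_add, map_add, h₁, h₂]
end
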